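/- arXiv:2210.00504 — 9 statements merged into one kernel-verified Lean document; each statement's English description precedes it below -/
import Mathlib

section
/- Let M be a set of N nonnegative integers and let 0 < t_1 < t_2 < ... < t_N be real numbers. If a polynomial P with real coefficients, all of whose exponents lie in M, vanishes at every point (-1)^k * t_k for k = 1, ..., N, then P is identically zero. -/
/-!
Split `P = A + B` into its even and odd parts. Vanishing at `(-1)^(k+1) t_k` says
`A(t_k) = (-1)^k B(t_k)`, so `A * B` changes sign weakly between consecutive `t_k`, and each of
the `N - 1` gaps contains a positive root of `A` or of `B`, distinct gaps giving distinct roots.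
By Descartes' rule of signs a nonzero polynomial has fewer positive roots than monomials, hence
`#supp A + #supp B > N ≥ #supp P`, which is absurd unless `P = 0`.
-/

open Polynomial Finset

namespace Polynomial

section Descartes

variable {R : Type*}

theorem signVariations_lt_card_support [Semiring R] [LinearOrder R] {P : R[X]} (hP : P ≠ 0) :
    P.signVariations < #P.support := by
  by_cases hE : P.eraseLead = 0
  · have hmono : P.signVariations = 0 := by
      conv_lhs => rw [← P.eraseLead_add_monomial_natDegree_leadingCoeff, hE, zero_add]
      exact signVariations_monomial _ _
    rw [hmono]
    exact card_pos.2 (support_nonempty.2 hP)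
  · calc P.signVariations ≤ P.eraseLead.signVariations + 1 := signVariations_le_eraseLead_succ P
      _ < #P.eraseLead.support + 1 := by gcongr; exact signVariations_lt_card_support hE
      _ = #P.support := card_support_eraseLead_add_one hP
termination_by #P.support
decreasing_by exact eraseLead_support_card_lt hP

theorem card_lt_card_support_of_forall_pos_isRoot [CommRing R] [LinearOrder R]
    [IsStrictOrderedRing R] {P : R[X]} (hP : P ≠ 0) {S : Finset R}
    (hS : ∀ x ∈ S, 0 < x ∧ P.IsRoot x) : #S < #P.support :=
  calc #S ≤ P.roots.countP (0 < ·) := by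
        rw [Multiset.countP_eq_card_filter, card_def]
        refine Multiset.card_le_card ((Multiset.le_iff_subset S.nodup).2 fun x hx => ?_)
        exact Multiset.mem_filter.2 ⟨(mem_roots hP).2 (hS x hx).2, (hS x hx).1⟩
    _ ≤ P.signVariations := roots_countP_pos_le_signVariations P
    _ < #P.support := signVariations_lt_card_support hP

theorem card_lt_card_support_of_eval_eq_zero [CommRing R] [LinearOrder R]
    [IsStrictOrderedRing R] {P : R[X]} (hP : P ≠ 0) {N : ℕ} {t : Fin N → R}
    (ht : Function.Injective t) (hpos : ∀ k, 0 < t k) (hroot : ∀ k, P.eval (t k) = 0) :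
    N < #P.support := by
  have := card_lt_card_support_of_forall_pos_isRoot hP (S := univ.image t) <| by
    simpa using fun k => ⟨hpos k, hroot k⟩
  rwa [card_image_of_injective _ ht, card_univ, Fintype.card_fin] at this

end Descartes

section Filter

variable {R : Type*} [Semiring R] (p : ℕ → Prop) [DecidablePred p] (P : R[X])

noncomputable def filter : R[X] := ∑ i ∈ P.support with p i, monomial i (P.coeff i)

theorem coeff_filter (j : ℕ) : (P.filter p).coeff j = if p j then P.coeff j else 0 := by
  simp only [filter, finsetSum_coeff, coeff_monomial, sum_ite_eq', mem_filter, mem_support_iff]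
  by_cases hj : p j <;> by_cases h0 : P.coeff j = 0 <;> simp [hj, h0]

theorem support_filter : (P.filter p).support = P.support.filter p := by
  ext j
  by_cases hj : p j <;> simp [mem_support_iff, coeff_filter, hj]

theorem filter_add_filter_not : P.filter p + P.filter (¬p ·) = P := by
  ext j
  by_cases hj : p j <;> simp [coeff_filter, hj]

end Filter

section Parity

variable {R : Type*} [CommRing R] {P : R[X]}

theorem eval_neg_one_pow_mul_of_forall_even (hP : ∀ i ∈ P.support, Even i) (n : ℕ) (x : R) :
    P.eval ((-1) ^ n * x) = P.eval x := by
  simp only [eval_eq_sum, Polynomial.sum_def]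
  refine sum_congr rfl fun i hi => ?_
  rw [mul_pow, ← pow_mul, mul_comm n, pow_mul, (hP i hi).neg_one_pow, one_pow, one_mul]

theorem eval_neg_one_pow_mul_of_forall_odd (hP : ∀ i ∈ P.support, Odd i) (n : ℕ) (x : R) :
    P.eval ((-1) ^ n * x) = (-1) ^ n * P.eval x := by
  simp only [eval_eq_sum, Polynomial.sum_def, mul_sum]
  refine sum_congr rfl fun i hi => ?_
  rw [mul_pow, ← pow_mul, mul_comm n, pow_mul, (hP i hi).neg_one_pow]
  ring

end Parity

end Polynomial

theorem exists_zero_Ico_or_zero_Ioc_of_eq_mul_of_eq_neg_mul {f g : ℝ → ℝ} {a b s : ℝ}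
    (hab : a < b) (hf : ContinuousOn f (Set.Icc a b)) (hg : ContinuousOn g (Set.Icc a b))
    (hs : s ≠ 0) (ha : f a = s * g a) (hb : f b = -s * g b) :
    (∃ x ∈ Set.Ico a b, f x = 0) ∨ (∃ x ∈ Set.Ioc a b, g x = 0) := by
  -- `f * g` equals `s * g a ^ 2` at `a` and `-s * g b ^ 2` at `b`, so it changes sign weakly.
  have hsign : (0 : ℝ) ∈ Set.uIcc (f a * g a) (f b * g b) := by
    rw [ha, hb, Set.mem_uIcc]
    rcases hs.lt_or_gt with h | h
    · left; constructor <;> nlinarith [sq_nonneg (g a), sq_nonneg (g b)]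
    · right; constructor <;> nlinarith [sq_nonneg (g a), sq_nonneg (g b)]
  rw [← Set.uIcc_of_le hab.le] at hf hg
  obtain ⟨x, hx, hfgx⟩ := intermediate_value_uIcc (hf.mul hg) hsign
  rw [Set.uIcc_of_le hab.le] at hx
  rcases mul_eq_zero.1 hfgx with hfx | hgx
  · rcases hx.2.lt_or_eq with hxb | rfl
    · exact .inl ⟨x, ⟨hx.1, hxb⟩, hfx⟩
    · rw [hb, mul_eq_zero, neg_eq_zero] at hfx
      exact .inr ⟨x, ⟨hab, le_rfl⟩, hfx.resolve_left hs⟩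
  · rcases hx.1.eq_or_lt with rfl | hax
    · exact .inl ⟨_, ⟨le_rfl, hab⟩, by rw [ha, hgx, mul_zero]⟩
    · exact .inr ⟨x, ⟨hax, hx.2⟩, hgx⟩

theorem exists_finsets_zeros_of_alternating {f g : ℝ → ℝ} (hf : Continuous f)
    (hg : Continuous g) {n : ℕ} {t : Fin (n + 1) → ℝ} (ht : StrictMono t)
    (hfg : ∀ k, f (t k) = (-1) ^ (k : ℕ) * g (t k)) :
    ∃ Sf Sg : Finset ℝ, (∀ x ∈ Sf, t 0 ≤ x ∧ f x = 0) ∧ (∀ x ∈ Sg, t 0 ≤ x ∧ g x = 0) ∧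
      n ≤ #Sf + #Sg := by
  -- In each gap `[t i, t (i+1)]` pick a zero of `f` in `Ico` or a zero of `g` in `Ioc`;
  -- the half-open choice keeps the picks of different gaps distinct.
  have hgap : ∀ i : Fin n, ∃ z : ℝ ⊕ ℝ,
      z.elim (fun x => x ∈ Set.Ico (t i.castSucc) (t i.succ) ∧ f x = 0)
        (fun x => x ∈ Set.Ioc (t i.castSucc) (t i.succ) ∧ g x = 0) := by
    intro i
    have hsucc : f (t i.succ) = -(-1) ^ (i : ℕ) * g (t i.succ) := by
      rw [hfg, Fin.val_succ, pow_succ]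
      ring
    rcases exists_zero_Ico_or_zero_Ioc_of_eq_mul_of_eq_neg_mul (ht i.castSucc_lt_succ)
      hf.continuousOn hg.continuousOn (neg_one_pow_ne_zero _) (hfg _) hsucc
      with ⟨x, hx⟩ | ⟨x, hx⟩
    exacts [⟨.inl x, hx⟩, ⟨.inr x, hx⟩]
  choose z hz using hgap
  have hinj : Function.Injective z := by
    refine .of_lt_imp_ne fun i j hij heq => ?_
    have hle : t i.succ ≤ t j.castSucc := ht.monotone (Fin.succ_le_castSucc_iff.2 hij)
    have hi := hz i
    have hj := hz j
    rw [heq] at hi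
    generalize z j = w at hi hj
    cases w with
    | inl x => exact absurd (hle.trans hj.1.1) (not_le.2 hi.1.2)
    | inr x => exact absurd (hi.1.2.trans hle) (not_le.2 hj.1.1)
  have hstart : ∀ i : Fin n, t 0 ≤ t i.castSucc := fun i => ht.monotone (Fin.zero_le _)
  refine ⟨(univ.image z).toLeft, (univ.image z).toRight, ?_, ?_, ?_⟩
  · intro x hx
    obtain ⟨i, -, hi⟩ := mem_image.1 (mem_toLeft.1 hx)
    have := hz i
    rw [hi] at this
    exact ⟨(hstart i).trans this.1.1, this.2⟩
  · intro x hx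
    obtain ⟨i, -, hi⟩ := mem_image.1 (mem_toRight.1 hx)
    have := hz i
    rw [hi] at this
    exact ⟨(hstart i).trans this.1.1.le, this.2⟩
  · rw [card_toLeft_add_card_toRight, card_image_of_injective _ hinj, card_univ, Fintype.card_fin]

theorem lt_card_support_add_card_support_of_alternating {A B : ℝ[X]} (hAB : A ≠ 0 ∨ B ≠ 0)
    {N : ℕ} {t : Fin N → ℝ} (ht : StrictMono t) (hpos : ∀ k, 0 < t k)
    (halt : ∀ k, A.eval (t k) = (-1) ^ (k : ℕ) * B.eval (t k)) :
    N < #A.support + #B.support := by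
  by_cases hB : B = 0
  · have hA : A ≠ 0 := hAB.resolve_right (not_not.2 hB)
    have := card_lt_card_support_of_eval_eq_zero hA ht.injective hpos fun k => by
      rw [halt, hB, eval_zero, mul_zero]
    omega
  by_cases hA : A = 0
  · have := card_lt_card_support_of_eval_eq_zero hB ht.injective hpos fun k => by
      have h := halt k
      rwa [hA, eval_zero, zero_eq_mul, or_iff_right (neg_one_pow_ne_zero _)] at h
    omega
  obtain _ | n := N
  · exact add_pos_of_pos_of_nonneg (card_pos.2 (support_nonempty.2 hA)) (Nat.zero_le _)
  obtain ⟨SA, SB, hSA, hSB, hcard⟩ :=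
    exists_finsets_zeros_of_alternating A.continuous B.continuous ht halt
  have hA' := card_lt_card_support_of_forall_pos_isRoot hA (S := SA) fun x hx =>
    ⟨(hpos 0).trans_le (hSA x hx).1, (hSA x hx).2⟩
  have hB' := card_lt_card_support_of_forall_pos_isRoot hB (S := SB) fun x hx =>
    ⟨(hpos 0).trans_le (hSB x hx).1, (hSB x hx).2⟩
  omega

theorem stmt_1 (N : ℕ) (M : Finset ℕ) (hM : M.card = N)
    (t : Fin N → ℝ) (ht : StrictMono t) (hpos : ∀ k, 0 < t k)
    (P : Polynomial ℝ) (hsupp : P.support ⊆ M)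
    (hz : ∀ k : Fin N, P.eval ((-1 : ℝ) ^ ((k : ℕ) + 1) * t k) = 0) : P = 0 := by
  by_contra hP
  set A := P.filter Even
  set B := P.filter (¬Even ·)
  have hA : ∀ i ∈ A.support, Even i := fun i hi => by
    rw [support_filter, mem_filter] at hi
    exact hi.2
  have hB : ∀ i ∈ B.support, Odd i := fun i hi => by
    rw [support_filter, mem_filter] at hi
    exact Nat.not_even_iff_odd.1 hi.2
  have hsplit : A + B = P := filter_add_filter_not Even P
  have hcard : #A.support + #B.support ≤ N := by
    rw [support_filter, support_filter, card_filter_add_card_filter_not, ← hM]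
    exact card_le_card hsupp
  have hAB : A ≠ 0 ∨ B ≠ 0 := by
    contrapose! hP
    rw [← hsplit, hP.1, hP.2, add_zero]
  have halt : ∀ k : Fin N, A.eval (t k) = (-1) ^ (k : ℕ) * B.eval (t k) := by
    intro k
    have h := hz k
    rw [← hsplit, eval_add, eval_neg_one_pow_mul_of_forall_even hA,
      eval_neg_one_pow_mul_of_forall_odd hB] at h
    linear_combination h
  exact (lt_card_support_add_card_support_of_alternating hAB ht hpos halt).not_ge hcard
end

section
/- Let M be a set of N nonnegative integers and let 0 < t_1 < t_2 < ... < t_N be real numbers. If a polynomial P with real coefficients, all of whose exponents lie in M, vanishes at every point -(-1)^k * t_k for k = 1, ..., N, then P is identically zero. -/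
open Polynomial Set

lemma ivt_poly (p : ℝ[X]) {u v : ℝ} (huv : u < v) (h : p.eval u * p.eval v < 0) :
    ∃ c, (u < c ∧ c < v) ∧ p.eval c = 0 := by
  have hc : ContinuousOn (fun x => p.eval x) (Set.Icc u v) := p.continuous.continuousOn
  rcases lt_or_ge (p.eval u) 0 with hu | hu
  · have hv : 0 < p.eval v := by nlinarith
    have := intermediate_value_Ioo (le_of_lt huv) hc (a := u) (b := v)
    have h0 : (0:ℝ) ∈ Set.Ioo (p.eval u) (p.eval v) := ⟨hu, hv⟩
    obtain ⟨c, hcm, hce⟩ := this h0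
    exact ⟨c, ⟨hcm.1, hcm.2⟩, hce⟩
  · have hu' : 0 < p.eval u := by
      rcases lt_or_eq_of_le hu with h' | h'
      · exact h'
      · exfalso; rw [← h'] at h; simp at h
    have hv : p.eval v < 0 := by nlinarith
    obtain ⟨c, hcm, hce⟩ := intermediate_value_Ioo' (le_of_lt huv) hc (a := u) (b := v)
      (⟨hv, hu'⟩ : (0:ℝ) ∈ Set.Ioo (p.eval v) (p.eval u))
    exact ⟨c, ⟨hcm.1, hcm.2⟩, hce⟩


lemma rolle_step (q : ℝ[X]) (a : ℕ) {u v : ℝ} (hu : 0 < u) (huv : u < v)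
    (hqu : q.eval u = 0) (hqv : q.eval v = 0) :
    ∃ c, (u < c ∧ c < v) ∧ (X * derivative q - C (a:ℝ) * q).eval c = 0 := by
  set g : ℝ → ℝ := fun x => q.eval x / x ^ a with hg
  have hcont : ContinuousOn g (Set.Icc u v) := by
    apply ContinuousOn.div q.continuous.continuousOn (continuous_pow a).continuousOn
    intro x hx
    exact pow_ne_zero _ (ne_of_gt (lt_of_lt_of_le hu hx.1))
  have hguv : g u = g v := by simp [hg, hqu, hqv]
  obtain ⟨c, hcm, hcd⟩ := exists_deriv_eq_zero huv hcont hguv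
  have hc0 : 0 < c := lt_trans hu hcm.1
  have hden : c ^ a ≠ 0 := pow_ne_zero _ (ne_of_gt hc0)
  have hD : HasDerivAt g
      (((q.derivative.eval c) * c ^ a - q.eval c * ((a:ℝ) * c ^ (a-1))) / (c ^ a) ^ 2) c := by
    exact HasDerivAt.div (q.hasDerivAt c) (hasDerivAt_pow a c) hden
  have hnum : (q.derivative.eval c) * c ^ a - q.eval c * ((a:ℝ) * c ^ (a-1)) = 0 := by
    have := hD.deriv
    rw [hcd] at this
    have h2 : ((c:ℝ) ^ a) ^ 2 ≠ 0 := pow_ne_zero _ hden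
    field_simp at this
    -- this should now be numerator = 0 maybe in some form
    linarith [this] 
  refine ⟨c, ⟨hcm.1, hcm.2⟩, ?_⟩
  simp only [eval_sub, eval_mul, eval_X, eval_C]
  cases a with
  | zero => simp at hnum; simp [hnum]
  | succ b =>
      have hb : (b + 1) - 1 = b := rfl
      rw [hb] at hnum
      have hcb : (c:ℝ) ^ b ≠ 0 := pow_ne_zero _ (ne_of_gt hc0)
      have key : c * q.derivative.eval c - ((b:ℝ)+1) * q.eval c = 0 := by
        apply mul_right_cancel₀ hcb
        push_cast at hnum
        linear_combination hnum
      push_cast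
      linarith [key]

lemma descartes_lite : ∀ (m : ℕ) (q : ℝ[X]), q ≠ 0 → q.support.card ≤ m →
    ∀ S : Finset ℝ, (∀ s ∈ S, 0 < s) → (∀ s ∈ S, q.eval s = 0) → S.card < m := by
  intro m
  induction m with
  | zero =>
    intro q hq hcard S _ _
    exfalso
    exact hq (Polynomial.support_eq_empty.mp
      (Finset.card_eq_zero.mp (le_antisymm hcard (Nat.zero_le _))))
  | succ m ih =>
    intro q hq hcard S hSpos hSroot
    by_cases hS0 : S.card = 0
    · omega
    set a := q.natTrailingDegree with ha
    set Q := X * derivative q - C (a:ℝ) * q with hQdef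
    have hQc : ∀ e : ℕ, Q.coeff e = q.coeff e * ((e:ℝ) - (a:ℝ)) := by
      intro e
      cases e with
      | zero => simp [hQdef, coeff_C_mul]; ring
      | succ k =>
        simp [hQdef, coeff_X_mul, coeff_derivative, coeff_C_mul]
        ring
    have hQsupp : Q.support ⊆ q.support.erase a := by
      intro e he
      rw [mem_support_iff] at he
      rw [Finset.mem_erase, mem_support_iff]
      constructor
      · rintro rfl
        exact he (by rw [hQc]; simp)
      · intro h0
        exact he (by rw [hQc, h0]; ring)
    by_cases hQ0 : Q = 0
    · exfalso
      have hsub : q.support ⊆ {a} := by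
        intro e he
        rw [Finset.mem_singleton]
        by_contra hea
        have h0 : Q.coeff e = 0 := by rw [hQ0]; simp
        rw [hQc] at h0
        rcases mul_eq_zero.mp h0 with h | h
        · exact (mem_support_iff.mp he) h
        · exact hea (Nat.cast_injective (by linarith : (e:ℝ) = (a:ℝ)))
      have hje : q.support = {a} :=
        (Finset.Nonempty.subset_singleton_iff (Polynomial.support_nonempty.mpr hq)).mp hsub
      obtain ⟨s, hs⟩ := Finset.card_pos.mp (Nat.pos_of_ne_zero hS0)
      have heval : q.eval s = q.coeff a * s ^ a := by
        rw [Polynomial.eval_eq_sum, Polynomial.sum_def, hje, Finset.sum_singleton]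
      have hca : q.coeff a ≠ 0 := by
        have : a ∈ q.support := by rw [hje]; exact Finset.mem_singleton_self a
        exact mem_support_iff.mp this
      have := hSroot s hs
      rw [heval] at this
      rcases mul_eq_zero.mp this with h | h
      · exact hca h
      · exact absurd h (pow_ne_zero _ (ne_of_gt (hSpos s hs)))
    · -- main case
      have hamem : a ∈ q.support := q.natTrailingDegree_mem_support_of_nonzero hq
      have hQcard : Q.support.card ≤ m := by
        have h1 : Q.support.card ≤ (q.support.erase a).card := Finset.card_le_card hQsupp
        have h2 : (q.support.erase a).card = q.support.card - 1 :=
          Finset.card_erase_of_mem hamem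
        have h3 : 1 ≤ q.support.card := Finset.card_pos.mpr ⟨a, hamem⟩
        omega
      set n := S.card with hn
      have hn1 : 1 ≤ n := Nat.pos_of_ne_zero hS0
      have hord := S.orderIsoOfFin hn.symm
      set sfun : ℕ → ℝ := fun i => if h : i < n then (hord ⟨i, h⟩ : ℝ) else 0 with hsfun
      have hmem : ∀ i (h : i < n), sfun i ∈ S := by
        intro i h
        simp only [hsfun, dif_pos h]
        exact (hord ⟨i, h⟩).2
      have hmono : ∀ i j, i < j → j < n → sfun i < sfun j := by
        intro i j hij hj
        have hi : i < n := lt_trans hij hj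
        simp only [hsfun, dif_pos hi, dif_pos hj]
        exact_mod_cast hord.strictMono (show (⟨i, hi⟩ : Fin n) < ⟨j, hj⟩ from hij)
      classical
      set cfun : ℕ → ℝ := fun i =>
        if h : ∃ c, (sfun i < c ∧ c < sfun (i+1)) ∧ Q.eval c = 0 then h.choose else 0
        with hcfun
      have hc : ∀ i, i + 1 < n →
          (sfun i < cfun i ∧ cfun i < sfun (i+1)) ∧ Q.eval (cfun i) = 0 := by
        intro i hi
        have hex : ∃ c, (sfun i < c ∧ c < sfun (i+1)) ∧ Q.eval c = 0 := by
          rw [hQdef]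
          exact rolle_step q a (hSpos _ (hmem i (by omega)))
            (hmono i (i+1) (lt_add_one i) hi)
            (hSroot _ (hmem i (by omega))) (hSroot _ (hmem (i+1) hi))
        simp only [hcfun, dif_pos hex]
        exact hex.choose_spec
      set T := (Finset.range (n-1)).image cfun with hT
      have hTcard : T.card = n - 1 := by
        rw [hT, Finset.card_image_of_injOn, Finset.card_range]
        intro i hi j hj hij
        simp only [Finset.coe_range, Set.mem_Iio] at hi hj
        by_contra hne
        have key : ∀ x y, x < y → y < n - 1 → cfun x < cfun y := by
          intro x y hxy hy
          have hx1 : x + 1 < n := by omega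
          have hy1 : y + 1 < n := by omega
          have h1 := (hc x hx1).1.2
          have h2 := (hc y hy1).1.1
          have h3 : sfun (x+1) ≤ sfun y := by
            rcases eq_or_lt_of_le (show x + 1 ≤ y by omega) with h | h
            · rw [h]
            · exact le_of_lt (hmono _ _ h (by omega))
          linarith
        rcases lt_or_gt_of_ne hne with h | h
        · exact absurd hij (ne_of_lt (key i j h hj))
        · exact absurd hij.symm (ne_of_lt (key j i h hi))
      have hfin := ih Q hQ0 hQcard T ?_ ?_
      · omega
      · intro x hx
        rw [hT, Finset.mem_image] at hx
        obtain ⟨i, hi, rfl⟩ := hx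
        rw [Finset.mem_range] at hi
        have h1 := (hc i (by omega)).1.1
        have h2 := hSpos _ (hmem i (by omega))
        linarith
      · intro x hx
        rw [hT, Finset.mem_image] at hx
        obtain ⟨i, hi, rfl⟩ := hx
        rw [Finset.mem_range] at hi
        exact (hc i (by omega)).2

theorem stmt_2 (N : ℕ) (M : Finset ℕ) (hM : M.card = N)
    (t : Fin N → ℝ) (ht : StrictMono t) (hpos : ∀ k, 0 < t k)
    (P : Polynomial ℝ) (hsupp : P.support ⊆ M)
    (hz : ∀ k : Fin N, P.eval (-((-1 : ℝ) ^ ((k : ℕ) + 1) * t k)) = 0) : P = 0 := by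
  classical
  by_contra hP
  rcases Nat.eq_zero_or_pos N with hN0 | hN1
  · subst hN0
    have : M = ∅ := Finset.card_eq_zero.mp hM
    rw [this, Finset.subset_empty, Polynomial.support_eq_empty] at hsupp
    exact hP hsupp
  set Ev := P.support.filter (fun e => e % 2 = 0) with hEv
  set Od := P.support.filter (fun e => ¬ e % 2 = 0) with hOd
  set A : ℝ[X] := ∑ e ∈ Ev, Polynomial.C (P.coeff e) * X ^ (e / 2) with hA
  set B : ℝ[X] := ∑ e ∈ Od, Polynomial.C (P.coeff e) * X ^ (e / 2) with hB
  have hPAB : ∀ x : ℝ, P.eval x = A.eval (x ^ 2) + x * B.eval (x ^ 2) := by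
    intro x
    have hAe : A.eval (x ^ 2) = ∑ e ∈ Ev, P.coeff e * x ^ e := by
      rw [hA, Polynomial.eval_finset_sum]
      apply Finset.sum_congr rfl
      intro e he
      have h2 : e % 2 = 0 := (Finset.mem_filter.mp he).2
      rw [eval_mul, eval_C, eval_pow, eval_X, ← pow_mul,
        show 2 * (e / 2) = e by omega]
    have hBe : x * B.eval (x ^ 2) = ∑ e ∈ Od, P.coeff e * x ^ e := by
      rw [hB, Polynomial.eval_finset_sum, Finset.mul_sum]
      apply Finset.sum_congr rfl
      intro e he
      have h2 : ¬ e % 2 = 0 := (Finset.mem_filter.mp he).2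
      rw [eval_mul, eval_C, eval_pow, eval_X, ← pow_mul]
      rw [show x * (P.coeff e * x ^ (2 * (e/2))) = P.coeff e * (x ^ (2 * (e/2)) * x) by ring]
      rw [← pow_succ, show 2 * (e / 2) + 1 = e by omega]
    rw [hAe, hBe, Polynomial.eval_eq_sum, Polynomial.sum_def]
    exact (Finset.sum_filter_add_sum_filter_not P.support _ _).symm
  have hAsupp : A.support.card ≤ Ev.card := by
    have h1 : A.support ⊆ Ev.image (fun e => e / 2) := by
      intro k hk
      rw [mem_support_iff] at hk
      rw [hA, Polynomial.finset_sum_coeff] at hk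
      obtain ⟨e, he, hne⟩ := Finset.exists_ne_zero_of_sum_ne_zero hk
      rw [Polynomial.coeff_C_mul, Polynomial.coeff_X_pow] at hne
      have hek : k = e / 2 := by
        by_contra hcon
        simp [hcon] at hne
      exact Finset.mem_image.mpr ⟨e, he, hek.symm⟩
    exact le_trans (Finset.card_le_card h1) Finset.card_image_le
  have hBsupp : B.support.card ≤ Od.card := by
    have h1 : B.support ⊆ Od.image (fun e => e / 2) := by
      intro k hk
      rw [mem_support_iff] at hk
      rw [hB, Polynomial.finset_sum_coeff] at hk
      obtain ⟨e, he, hne⟩ := Finset.exists_ne_zero_of_sum_ne_zero hk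
      rw [Polynomial.coeff_C_mul, Polynomial.coeff_X_pow] at hne
      have hek : k = e / 2 := by
        by_contra hcon
        simp [hcon] at hne
      exact Finset.mem_image.mpr ⟨e, he, hek.symm⟩
    exact le_trans (Finset.card_le_card h1) Finset.card_image_le
  have hEvOd : Ev.card + Od.card = P.support.card :=
    Finset.card_filter_add_card_filter_not _
  have hsuppN : P.support.card ≤ N := hM ▸ Finset.card_le_card hsupp
  set ty : ℕ → ℝ := fun i => if h : i < N then t ⟨i, h⟩ else 0 with hty
  have htypos : ∀ i, i < N → 0 < ty i := by
    intro i h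
    simp only [hty, dif_pos h]
    exact hpos _
  have htymono : ∀ i j, i < j → j < N → ty i < ty j := by
    intro i j hij hj
    have hi : i < N := lt_trans hij hj
    simp only [hty, dif_pos hi, dif_pos hj]
    exact ht (show (⟨i, hi⟩ : Fin N) < ⟨j, hj⟩ from hij)
  have hsqmono : ∀ i j, i < j → j < N → (ty i) ^ 2 < (ty j) ^ 2 := by
    intro i j hij hj
    have h1 := htypos i (lt_trans hij hj)
    have h2 := htymono i j hij hj
    nlinarith
  have hrel : ∀ i, (h : i < N) → A.eval ((ty i) ^ 2)
      = -((-1 : ℝ) ^ i * ty i) * B.eval ((ty i) ^ 2) := by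
    intro i h
    have h0 := hz ⟨i, h⟩
    have hpt : -((-1 : ℝ) ^ (i + 1) * t ⟨i, h⟩) = (-1 : ℝ) ^ i * ty i := by
      simp only [hty, dif_pos h, pow_succ]
      ring
    rw [hpt, hPAB] at h0
    have hsq : ((-1 : ℝ) ^ i * ty i) ^ 2 = (ty i) ^ 2 := by
      rw [mul_pow, ← pow_mul, mul_comm i 2, pow_mul]
      simp
    rw [hsq] at h0
    linear_combination h0
  have hfac : ∀ i, i < N → -((-1 : ℝ) ^ i * ty i) ≠ 0 := by
    intro i h
    have := htypos i h
    have h1 : ((-1 : ℝ) ^ i) ≠ 0 := pow_ne_zero _ (by norm_num)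
    intro hc
    rcases mul_eq_zero.mp (neg_eq_zero.mp hc) with h' | h'
    · exact h1 h'
    · linarith
  have hiff : ∀ i, (h : i < N) → (A.eval ((ty i) ^ 2) = 0 ↔ B.eval ((ty i) ^ 2) = 0) := by
    intro i h
    constructor
    · intro hA0
      rw [hrel i h] at hA0
      rcases mul_eq_zero.mp hA0 with h' | h'
      · exact absurd h' (hfac i h)
      · exact h'
    · intro hB0
      rw [hrel i h, hB0, mul_zero]
  -- special cases
  by_cases hAz : A = 0
  · by_cases hBz : B = 0
    · exact hP (by
        apply Polynomial.funext
        intro x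
        rw [hPAB x, hAz, hBz]
        simp)
    · have hroots : ∀ i, i < N → B.eval ((ty i) ^ 2) = 0 := by
        intro i h
        exact (hiff i h).mp (by rw [hAz]; simp)
      have hS : ∀ s ∈ (Finset.range N).image (fun i => (ty i) ^ 2), 0 < s ∧ B.eval s = 0 := by
        intro s hs
        obtain ⟨i, hi, rfl⟩ := Finset.mem_image.mp hs
        rw [Finset.mem_range] at hi
        exact ⟨pow_pos (htypos i hi) 2, hroots i hi⟩
      have hcard : ((Finset.range N).image (fun i => (ty i) ^ 2)).card = N := by
        rw [Finset.card_image_of_injOn, Finset.card_range]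
        intro i hi j hj hij
        rw [Finset.coe_range, Set.mem_Iio] at hi hj
        by_contra hne
        rcases lt_or_gt_of_ne hne with h | h
        · exact absurd hij (ne_of_lt (hsqmono i j h hj))
        · exact absurd hij.symm (ne_of_lt (hsqmono j i h hi))
      have := descartes_lite N B hBz (le_trans hBsupp (by omega)) _
        (fun s hs => (hS s hs).1) (fun s hs => (hS s hs).2)
      omega
  · by_cases hBz : B = 0
    · have hroots : ∀ i, i < N → A.eval ((ty i) ^ 2) = 0 := by
        intro i h
        exact (hiff i h).mpr (by rw [hBz]; simp)
      have hS : ∀ s ∈ (Finset.range N).image (fun i => (ty i) ^ 2), 0 < s ∧ A.eval s = 0 := by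
        intro s hs
        obtain ⟨i, hi, rfl⟩ := Finset.mem_image.mp hs
        rw [Finset.mem_range] at hi
        exact ⟨pow_pos (htypos i hi) 2, hroots i hi⟩
      have hcard : ((Finset.range N).image (fun i => (ty i) ^ 2)).card = N := by
        rw [Finset.card_image_of_injOn, Finset.card_range]
        intro i hi j hj hij
        rw [Finset.coe_range, Set.mem_Iio] at hi hj
        by_contra hne
        rcases lt_or_gt_of_ne hne with h | h
        · exact absurd hij (ne_of_lt (hsqmono i j h hj))
        · exact absurd hij.symm (ne_of_lt (hsqmono j i h hi))
      have := descartes_lite N A hAz (le_trans hAsupp (by omega)) _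
        (fun s hs => (hS s hs).1) (fun s hs => (hS s hs).2)
      omega
    · -- main case : A ≠ 0 and B ≠ 0
      have hprod : ∀ j, j + 1 < N →
          A.eval ((ty j) ^ 2) * A.eval ((ty (j+1)) ^ 2)
            = -(ty j * ty (j+1)) * (B.eval ((ty j) ^ 2) * B.eval ((ty (j+1)) ^ 2)) := by
        intro j hj
        have hps : (-1 : ℝ) ^ (j+1) = (-1) ^ j * (-1) := pow_succ _ _
        rw [hrel j (by omega), hrel (j+1) hj, hps]
        have h1 : ((-1 : ℝ) ^ j) ^ 2 = 1 := by
          rw [← pow_mul, mul_comm j 2, pow_mul]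
          simp
        linear_combination (-(ty j * ty (j+1) * B.eval ((ty j) ^ 2)
          * B.eval ((ty (j+1)) ^ 2))) * h1
      set RA := (Finset.range N).filter (fun i => A.eval ((ty i) ^ 2) = 0) with hRA
      set bad := (Finset.range (N-1)).filter
        (fun j => A.eval ((ty j) ^ 2) = 0 ∨ A.eval ((ty (j+1)) ^ 2) = 0) with hbad
      set good := (Finset.range (N-1)).filter
        (fun j => ¬ (A.eval ((ty j) ^ 2) = 0 ∨ A.eval ((ty (j+1)) ^ 2) = 0)) with hgood
      have hbadgood : bad.card + good.card = N - 1 := by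
        rw [hbad, hgood, Finset.card_filter_add_card_filter_not, Finset.card_range]
      set cfun : ℕ → ℝ := fun j =>
        if h : ∃ c, ((ty j) ^ 2 < c ∧ c < (ty (j+1)) ^ 2) ∧ (A.eval c = 0 ∨ B.eval c = 0)
        then h.choose else 0 with hcfun
      have hcf : ∀ j ∈ good, ((ty j) ^ 2 < cfun j ∧ cfun j < (ty (j+1)) ^ 2)
          ∧ (A.eval (cfun j) = 0 ∨ B.eval (cfun j) = 0) := by
        intro j hj
        rw [hgood, Finset.mem_filter, Finset.mem_range] at hj
        obtain ⟨hjN, hjA⟩ := hj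
        push_neg at hjA
        obtain ⟨hA1, hA2⟩ := hjA
        have hj1 : j + 1 < N := by omega
        have hjN' : j < N := by omega
        have hB1 : B.eval ((ty j) ^ 2) ≠ 0 := fun hc => hA1 ((hiff j hjN').mpr hc)
        have hB2 : B.eval ((ty (j+1)) ^ 2) ≠ 0 := fun hc => hA2 ((hiff (j+1) hj1).mpr hc)
        have hyy : (ty j) ^ 2 < (ty (j+1)) ^ 2 := hsqmono j (j+1) (lt_add_one j) hj1
        have hex : ∃ c, ((ty j) ^ 2 < c ∧ c < (ty (j+1)) ^ 2)
            ∧ (A.eval c = 0 ∨ B.eval c = 0) := by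
          rcases lt_trichotomy (B.eval ((ty j) ^ 2) * B.eval ((ty (j+1)) ^ 2)) 0
            with hlt | heq | hgt
          · obtain ⟨c, hcm, hce⟩ := ivt_poly B hyy hlt
            exact ⟨c, hcm, Or.inr hce⟩
          · exact absurd heq (mul_ne_zero hB1 hB2)
          · have hAneg : A.eval ((ty j) ^ 2) * A.eval ((ty (j+1)) ^ 2) < 0 := by
              rw [hprod j hj1]
              have ht1 := htypos j hjN'
              have ht2 := htypos (j+1) hj1
              nlinarith [mul_pos (mul_pos ht1 ht2) hgt]
            obtain ⟨c, hcm, hce⟩ := ivt_poly A hyy hAneg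
            exact ⟨c, hcm, Or.inl hce⟩
        simp only [hcfun, dif_pos hex]
        exact hex.choose_spec
      set goodA := good.filter (fun j => A.eval (cfun j) = 0) with hgoodA
      set goodB := good.filter (fun j => ¬ A.eval (cfun j) = 0) with hgoodB
      have hgAB : goodA.card + goodB.card = good.card := by
        rw [hgoodA, hgoodB, Finset.card_filter_add_card_filter_not]
      -- injectivity facts
      have hyinj : Set.InjOn (fun i => (ty i) ^ 2) (Finset.range N : Set ℕ) := by
        intro i hi j hj hij
        rw [Finset.coe_range, Set.mem_Iio] at hi hj
        by_contra hne
        rcases lt_or_gt_of_ne hne with h | h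
        · exact absurd hij (ne_of_lt (hsqmono i j h hj))
        · exact absurd hij.symm (ne_of_lt (hsqmono j i h hi))
      have hgoodsub : ∀ j ∈ good, j < N - 1 := by
        intro j hj
        rw [hgood, Finset.mem_filter, Finset.mem_range] at hj
        exact hj.1
      have hcmono : ∀ x ∈ good, ∀ y ∈ good, x < y → cfun x < cfun y := by
        intro x hx y hy hxy
        have h1 := (hcf x hx).1.2
        have h2 := (hcf y hy).1.1
        have hyN := hgoodsub y hy
        have h3 : (ty (x+1)) ^ 2 ≤ (ty y) ^ 2 := by
          rcases eq_or_lt_of_le (show x + 1 ≤ y by omega) with h | h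
          · rw [h]
          · exact le_of_lt (hsqmono _ _ h (by omega))
        linarith
      have hcinj : ∀ (g : Finset ℕ), g ⊆ good → Set.InjOn cfun (g : Set ℕ) := by
        intro g hg i hi j hj hij
        have hi' : i ∈ good := hg hi
        have hj' : j ∈ good := hg hj
        by_contra hne
        rcases lt_or_gt_of_ne hne with h | h
        · exact absurd hij (ne_of_lt (hcmono i hi' j hj' h))
        · exact absurd hij.symm (ne_of_lt (hcmono j hj' i hi' h))
      have hdisjgen : ∀ (g : Finset ℕ), g ⊆ good →
          Disjoint (RA.image (fun i => (ty i) ^ 2)) (g.image cfun) := by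
        intro g hg
        rw [Finset.disjoint_left]
        intro a ha hb
        obtain ⟨i, hi, rfl⟩ := Finset.mem_image.mp ha
        obtain ⟨j, hj, hji⟩ := Finset.mem_image.mp hb
        have hj' := hg hj
        have hjN := hgoodsub j hj'
        have h1 := (hcf j hj').1.1
        have h2 := (hcf j hj').1.2
        rw [hRA, Finset.mem_filter, Finset.mem_range] at hi
        rcases le_or_gt i j with h | h
        · have : (ty i) ^ 2 ≤ (ty j) ^ 2 := by
            rcases eq_or_lt_of_le h with h' | h'
            · rw [h']
            · exact le_of_lt (hsqmono _ _ h' (by omega))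
          linarith [hji]
        · have : (ty (j+1)) ^ 2 ≤ (ty i) ^ 2 := by
            rcases eq_or_lt_of_le (show j + 1 ≤ i by omega) with h' | h'
            · rw [h']
            · exact le_of_lt (hsqmono _ _ h' hi.1)
          linarith [hji]
      -- the two root sets
      have hRAcardim : (RA.image (fun i => (ty i) ^ 2)).card = RA.card := by
        apply Finset.card_image_of_injOn
        apply Set.InjOn.mono _ hyinj
        intro x hx
        rw [Finset.mem_coe, hRA, Finset.mem_filter] at hx
        rw [Finset.coe_range]
        exact Finset.mem_range.mp hx.1
      have hkey : ∀ (g : Finset ℕ) (p : ℝ[X]) (mm : ℕ), p ≠ 0 → g ⊆ good →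
          (∀ j ∈ g, p.eval (cfun j) = 0) →
          (∀ i ∈ RA, p.eval ((ty i) ^ 2) = 0) →
          p.support.card ≤ mm →
          RA.card + g.card < mm := by
        intro g p mm hp hg hgroot hRAroot hpc
        have hScard : ((RA.image (fun i => (ty i) ^ 2)) ∪ g.image cfun).card
            = RA.card + g.card := by
          rw [Finset.card_union_of_disjoint (hdisjgen g hg), hRAcardim,
            Finset.card_image_of_injOn (hcinj g hg)]
        have := descartes_lite _ p hp hpc ((RA.image (fun i => (ty i) ^ 2)) ∪ g.image cfun)
          ?_ ?_
        · omega
        · intro s hs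
          rcases Finset.mem_union.mp hs with h | h
          · obtain ⟨i, hi, rfl⟩ := Finset.mem_image.mp h
            rw [hRA, Finset.mem_filter, Finset.mem_range] at hi
            exact pow_pos (htypos i hi.1) 2
          · obtain ⟨j, hj, rfl⟩ := Finset.mem_image.mp h
            have hj' := hg hj
            have := (hcf j hj').1.1
            have := htypos j (by have := hgoodsub j hj'; omega)
            nlinarith
        · intro s hs
          rcases Finset.mem_union.mp hs with h | h
          · obtain ⟨i, hi, rfl⟩ := Finset.mem_image.mp h
            exact hRAroot i hi
          · obtain ⟨j, hj, rfl⟩ := Finset.mem_image.mp h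
            exact hgroot j hj
      have h1 : RA.card + goodA.card < Ev.card :=
        hkey goodA A Ev.card hAz (Finset.filter_subset _ _)
          (fun j hj => (Finset.mem_filter.mp hj).2)
          (fun i hi => (Finset.mem_filter.mp hi).2) hAsupp
      have h2 : RA.card + goodB.card < Od.card := by
        apply hkey goodB B Od.card hBz (Finset.filter_subset _ _)
        · intro j hj
          have hj' : j ∈ good := Finset.filter_subset _ _ hj
          have hnA : ¬ A.eval (cfun j) = 0 := (Finset.mem_filter.mp hj).2
          rcases (hcf j hj').2 with h | h
          · exact absurd h hnA
          · exact h
        · intro i hi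
          have hiN : i < N := Finset.mem_range.mp (Finset.mem_filter.mp hi).1
          exact (hiff i hiN).mp (Finset.mem_filter.mp hi).2
        · exact hBsupp
      have hbad2r : bad.card ≤ RA.card + RA.card := by
        have hsub : bad ⊆ RA ∪ RA.image (fun k => k - 1) := by
          intro j hj
          rw [hbad, Finset.mem_filter, Finset.mem_range] at hj
          obtain ⟨hjN, hj2⟩ := hj
          rcases hj2 with h | h
          · exact Finset.mem_union_left _
              (by rw [hRA, Finset.mem_filter, Finset.mem_range]; exact ⟨by omega, h⟩)
          · apply Finset.mem_union_right
            apply Finset.mem_image.mpr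
            exact ⟨j + 1, by rw [hRA, Finset.mem_filter, Finset.mem_range]
                             exact ⟨by omega, h⟩, by omega⟩
        calc bad.card ≤ (RA ∪ RA.image (fun k => k - 1)).card := Finset.card_le_card hsub
          _ ≤ RA.card + (RA.image (fun k => k - 1)).card := Finset.card_union_le _ _
          _ ≤ RA.card + RA.card := by
              have := Finset.card_image_le (s := RA) (f := fun k => k - 1)
              omega
      omega
end

section
/- Let N ≥ 2, let s ≥ 0 be a real number, and let Γ be a set of N nonnegative integers. Then the generalized Vandermonde matrix with entries (s+j)^{γ_i}, where j ranges over 0,...,N-1 and γ_i over the elements of Γ, is invertible, provided s > 0 (or s ≥ 0 with 0 ∈ Γ). -/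
/-!
A nonzero sum `∑ cᵢ t^γᵢ` with `n` strictly increasing exponents has at most `n - 1` positive
zeros: dividing by `t^γ₀` does not change the positive zeros, and by Rolle's theorem the
derivative of the quotient, a sum with `n - 1` terms, has a zero strictly between any two
consecutive ones. Hence no nonzero combination of the rows of the generalized Vandermonde
matrix vanishes when the nodes are distinct and positive. A node `0` is allowed when `γ₀ = 0`,
since the column it gives is the first unit vector.
-/

open Finset

theorem sum_mul_pow_eq_pow_mul_sum {ι R : Type*} [CommSemiring R] (s : Finset ι) (c : ι → R)
    (e : ι → ℕ) {m : ℕ} (hm : ∀ i, m ≤ e i) (t : R) :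
    ∑ i ∈ s, c i * t ^ e i = t ^ m * ∑ i ∈ s, c i * t ^ (e i - m) := by
  rw [mul_sum]
  refine sum_congr rfl fun i _ => ?_
  rw [mul_left_comm, ← pow_add, Nat.add_sub_cancel' (hm i)]

theorem exists_interlacing_zeros_of_hasDerivAt {n : ℕ} {f f' : ℝ → ℝ}
    (hf : ∀ t, HasDerivAt f (f' t) t) {x : Fin (n + 1) → ℝ} (hx : StrictMono x)
    (hfx : ∀ j, f (x j) = 0) :
    ∃ y : Fin n → ℝ, StrictMono y ∧ (∀ j, x j.castSucc < y j) ∧ ∀ j, f' (y j) = 0 := by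
  have hrolle : ∀ j : Fin n, ∃ y ∈ Set.Ioo (x j.castSucc) (x j.succ), f' y = 0 := fun j =>
    exists_hasDerivAt_eq_zero (hx j.castSucc_lt_succ)
      (fun t _ => (hf t).continuousAt.continuousWithinAt) (by rw [hfx, hfx]) fun t _ => hf t
  choose y hy hy' using hrolle
  refine ⟨y, fun a b hab => ?_, fun j => (hy j).1, hy'⟩
  calc y a < x a.succ := (hy a).2
    _ ≤ x b.castSucc := hx.monotone (Fin.succ_le_castSucc_iff.2 hab)
    _ < y b := (hy b).1

theorem eq_zero_of_sum_mul_pow_eq_zero_of_pos {n : ℕ} {γ : Fin n → ℕ} (hγ : StrictMono γ)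
    {x : Fin n → ℝ} (hx : StrictMono x) (hx₀ : ∀ j, 0 < x j) {c : Fin n → ℝ}
    (hc : ∀ j, ∑ i, c i * x j ^ γ i = 0) : c = 0 := by
  induction n with
  | zero => exact Subsingleton.elim _ _
  | succ n ih =>
    have hγ₀ : ∀ i, γ 0 ≤ γ i := fun i => hγ.monotone (Fin.zero_le i)
    set g : ℝ → ℝ := fun t => ∑ i, c i * t ^ (γ i - γ 0)
    have hg : ∀ j, g (x j) = 0 := fun j => by
      have h := hc j
      rw [sum_mul_pow_eq_pow_mul_sum _ _ _ hγ₀] at h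
      exact (mul_eq_zero.1 h).resolve_left (pow_ne_zero _ (hx₀ j).ne')
    set d : Fin n → ℝ := fun i => c i.succ * ↑(γ i.succ - γ 0)
    have hg' : ∀ t, HasDerivAt g (∑ i, d i * t ^ (γ i.succ - γ 0 - 1)) t := fun t => by
      refine (HasDerivAt.fun_sum fun i _ =>
        (hasDerivAt_pow (γ i - γ 0) t).const_mul (c i)).congr_deriv ?_
      simp only [Fin.sum_univ_succ, Nat.sub_self, Nat.cast_zero, zero_mul, mul_zero, zero_add, d,
        mul_assoc]
    obtain ⟨y, hy, hxy, hy₀⟩ := exists_interlacing_zeros_of_hasDerivAt hg' hx hg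
    have hδ : StrictMono fun i : Fin n => γ i.succ - γ 0 - 1 := fun a b hab => by
      have := hγ (Fin.succ_lt_succ_iff.2 hab)
      have := hγ a.succ_pos
      dsimp only
      omega
    have hd := ih hδ hy (fun j => (hx₀ _).trans (hxy j)) hy₀
    have hc_succ : ∀ i : Fin n, c i.succ = 0 := fun i => by
      have hpos : γ 0 < γ i.succ := hγ i.succ_pos
      have := congrFun hd i
      simp only [d, Pi.zero_apply, mul_eq_zero, Nat.cast_eq_zero] at this
      exact this.resolve_right (by omega)
    have hc_zero : c 0 = 0 := by
      have h := hc 0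
      simp only [Fin.sum_univ_succ, hc_succ, zero_mul, sum_const_zero, add_zero] at h
      exact (mul_eq_zero.1 h).resolve_right (pow_ne_zero _ (hx₀ 0).ne')
    exact funext fun i => Fin.cases hc_zero hc_succ i

theorem eq_zero_of_sum_mul_pow_eq_zero_of_nonneg {n : ℕ} {γ : Fin n → ℕ} (hγ : StrictMono γ)
    {x : Fin n → ℝ} (hx : StrictMono x) (hx₀ : ∀ j, 0 ≤ x j)
    (hγ₀ : ∀ j, x j = 0 → 0 ∈ Set.range γ) {c : Fin n → ℝ}
    (hc : ∀ j, ∑ i, c i * x j ^ γ i = 0) : c = 0 := by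
  cases n with
  | zero => exact Subsingleton.elim _ _
  | succ n =>
    rcases (hx₀ 0).lt_or_eq with hpos | hzero
    · exact eq_zero_of_sum_mul_pow_eq_zero_of_pos hγ hx
        (fun j => hpos.trans_le (hx.monotone (Fin.zero_le j))) hc
    obtain ⟨k, hk⟩ := hγ₀ 0 hzero.symm
    have hγ_zero : γ 0 = 0 := by
      have := hγ.monotone (Fin.zero_le k)
      omega
    have hγ_succ : ∀ i : Fin n, γ i.succ ≠ 0 := fun i => by
      have := hγ i.succ_pos
      omega
    have hc_zero : c 0 = 0 := by
      simpa [Fin.sum_univ_succ, hγ_zero, ← hzero, hγ_succ] using hc 0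
    have hc_succ : (fun i : Fin n => c i.succ) = 0 := by
      refine eq_zero_of_sum_mul_pow_eq_zero_of_pos (hγ.comp Fin.strictMono_succ)
        (hx.comp Fin.strictMono_succ) (fun j => hzero.trans_lt (hx j.succ_pos)) fun j => ?_
      simpa [Fin.sum_univ_succ, hc_zero] using hc j.succ
    exact funext fun i => Fin.cases hc_zero (congrFun hc_succ) i

def generalizedVandermonde {n : ℕ} (x : Fin n → ℝ) (γ : Fin n → ℕ) : Matrix (Fin n) (Fin n) ℝ :=
  Matrix.of fun i j => x j ^ γ i

theorem det_generalizedVandermonde_ne_zero {n : ℕ} {γ : Fin n → ℕ} (hγ : StrictMono γ)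
    {x : Fin n → ℝ} (hx : StrictMono x) (hx₀ : ∀ j, 0 ≤ x j)
    (hγ₀ : ∀ j, x j = 0 → 0 ∈ Set.range γ) :
    (generalizedVandermonde x γ).det ≠ 0 := by
  intro hdet
  obtain ⟨c, hc, hcx⟩ := Matrix.exists_vecMul_eq_zero_iff.2 hdet
  refine hc (eq_zero_of_sum_mul_pow_eq_zero_of_nonneg hγ hx hx₀ hγ₀ fun j => ?_)
  simpa [generalizedVandermonde, Matrix.vecMul, dotProduct] using congrFun hcx j

theorem stmt_6_general (N : ℕ) (s : ℝ)
    (γ : Fin N → ℕ) (hγ : StrictMono γ)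
    (hs : 0 < s ∨ (0 ≤ s ∧ (0 : ℕ) ∈ Set.range γ)) :
    (Matrix.of fun i j : Fin N => (s + (j : ℕ)) ^ γ i).det ≠ 0 := by
  have hs₀ : 0 ≤ s := hs.elim le_of_lt And.left
  refine det_generalizedVandermonde_ne_zero hγ (fun a b hab => by simpa using hab)
    (fun j => by positivity) fun j hj => ?_
  rcases hs with hpos | ⟨-, h0⟩
  · have : 0 < s + (j : ℕ) := by positivity
    exact absurd hj this.ne'
  · exact h0

theorem stmt_6 (N : ℕ) (hN : 2 ≤ N) (s : ℝ)
    (γ : Fin N → ℕ) (hγ : StrictMono γ)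
    (hs : 0 < s ∨ (0 ≤ s ∧ (0 : ℕ) ∈ Set.range γ)) :
    (Matrix.of fun i j : Fin N => (s + (j : ℕ)) ^ γ i).det ≠ 0 :=
  stmt_6_general N s γ hγ hs
end

section
/- For every fixed set Γ of N nonnegative integers, the function s ↦ det V((s, s+1, ..., s+N-1); Γ) is a polynomial in s that is not identically zero; hence the matrix V((s,...,s+N-1); Γ) is invertible for all real s outside a finite set. -/
open Polynomial Finset

/-- Rolle step: from a finset of roots of `g`, produce roots of `g'`. -/
lemma rolle_finset (g : Polynomial ℝ) (S : Finset ℝ)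
    (h0 : ∀ r ∈ S, 0 < r) (hroot : ∀ r ∈ S, g.eval r = 0) :
    ∃ T : Finset ℝ, S.card ≤ T.card + 1 ∧ (∀ r ∈ T, 0 < r) ∧
      ∀ r ∈ T, g.derivative.eval r = 0 := by
  rcases Nat.eq_zero_or_pos S.card with h | hM
  · exact ⟨∅, by simp [h], by simp, by simp⟩
  set M := S.card with hMdef
  have e := S.orderEmbOfFin (k := M) rfl
  have key : ∀ k : Fin (M - 1), ∃ c : ℝ,
      (S.orderEmbOfFin rfl ⟨k.1, by omega⟩ < c ∧ c < S.orderEmbOfFin rfl ⟨k.1 + 1, by omega⟩)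
        ∧ g.derivative.eval c = 0 := by
    intro k
    have hk : k.1 < M := by omega
    have hk1 : k.1 + 1 < M := by omega
    have hab : S.orderEmbOfFin rfl ⟨k.1, hk⟩ < S.orderEmbOfFin rfl ⟨k.1 + 1, hk1⟩ := by
      apply (S.orderEmbOfFin rfl).strictMono
      exact Fin.mk_lt_mk.mpr (by omega)
    have hfI : g.eval (S.orderEmbOfFin rfl ⟨k.1, hk⟩)
        = g.eval (S.orderEmbOfFin rfl ⟨k.1 + 1, hk1⟩) := by
      rw [hroot _ (S.orderEmbOfFin_mem rfl _), hroot _ (S.orderEmbOfFin_mem rfl _)]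
    obtain ⟨c, hc, hdc⟩ := exists_deriv_eq_zero hab (g.continuous.continuousOn) hfI
    refine ⟨c, hc, ?_⟩
    rwa [Polynomial.deriv] at hdc
  choose F hF1 hF2 using key
  have hFmono : StrictMono F := by
    intro k l hkl
    calc F k < S.orderEmbOfFin rfl ⟨k.1 + 1, by omega⟩ := (hF1 k).2
      _ ≤ S.orderEmbOfFin rfl ⟨l.1, by omega⟩ := by
          rcases eq_or_lt_of_le (Nat.succ_le_of_lt (Fin.lt_def.mp hkl)) with h | h
          · exact le_of_eq (congrArg _ (Fin.ext h))
          · exact le_of_lt ((S.orderEmbOfFin rfl).strictMono (Fin.mk_lt_mk.mpr h))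
      _ < F l := (hF1 l).1
  refine ⟨Finset.image F Finset.univ, ?_, ?_, ?_⟩
  · rw [Finset.card_image_of_injective _ hFmono.injective, Finset.card_univ, Fintype.card_fin]
    omega
  · intro r hr
    obtain ⟨k, _, rfl⟩ := Finset.mem_image.mp hr
    exact lt_trans (h0 _ (S.orderEmbOfFin_mem rfl _)) (hF1 k).1
  · intro r hr
    obtain ⟨k, _, rfl⟩ := Finset.mem_image.mp hr
    exact hF2 k

/-- Descartes-type bound: a nonzero real polynomial with at most `n` terms has
fewer than `n` distinct positive roots. -/
lemma descartes : ∀ n : ℕ, ∀ q : Polynomial ℝ, q ≠ 0 → q.support.card ≤ n →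
    ∀ S : Finset ℝ, (∀ r ∈ S, 0 < r) → (∀ r ∈ S, q.eval r = 0) → S.card < n := by
  intro n
  induction n with
  | zero =>
    intro q hq hc S _ _
    exact absurd (Finset.card_eq_zero.mp (Nat.le_zero.mp hc)) (by simpa using hq)
  | succ n ih =>
    intro q hq hc S hpos hroot
    rcases S.eq_empty_or_nonempty with rfl | hSne
    · simp
    set m := q.natTrailingDegree with hm
    have hdvd : (X : Polynomial ℝ) ^ m ∣ q := by
      rw [X_pow_dvd_iff]
      intro d hd
      exact coeff_eq_zero_of_lt_natTrailingDegree hd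
    obtain ⟨g, hg⟩ := hdvd
    have hgne : g ≠ 0 := by rintro rfl; simp at hg; exact hq hg
    have hg0 : g.coeff 0 ≠ 0 := by
      have h1 : q.coeff m ≠ 0 :=
        mem_support_iff.mp (natTrailingDegree_mem_support_of_nonzero hq)
      have h2 : q.coeff m = g.coeff 0 := by
        have := coeff_X_pow_mul g m 0
        rw [← hg] at this
        simpa using this
      rwa [h2] at h1
    -- the support of q is the support of g shifted by m
    have hsuppg : g.support.card = q.support.card := by
      have : q.support = g.support.image (· + m) := by
        ext k
        simp only [mem_support_iff, Finset.mem_image]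
        constructor
        · intro hk
          rcases le_or_gt m k with h | h
          · refine ⟨k - m, ?_, by omega⟩
            have := coeff_X_pow_mul g m (k - m)
            rw [← hg] at this
            rw [show k - m + m = k by omega] at this
            rwa [← this]
          · exact absurd (coeff_eq_zero_of_lt_natTrailingDegree h) hk
        · rintro ⟨d, hd, rfl⟩
          have := coeff_X_pow_mul g m d
          rw [← hg] at this
          rwa [this]
      rw [this, Finset.card_image_of_injective _ (add_left_injective m)]
    have hgroot : ∀ r ∈ S, g.eval r = 0 := by
      intro r hr
      have hq0 : q.eval r = 0 := hroot r hr
      rw [hg, eval_mul, eval_pow, eval_X] at hq0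
      exact (mul_eq_zero.mp hq0).resolve_left (pow_ne_zero _ (hpos r hr).ne')
    -- derivative of g is nonzero
    have hgdeg : 0 < g.natDegree := by
      rcases hSne with ⟨r, hr⟩
      by_contra h
      push_neg at h
      have : g = C (g.coeff 0) := eq_C_of_natDegree_eq_zero (Nat.le_zero.mp h)
      have := hgroot r hr
      rw [‹g = C (g.coeff 0)›, eval_C] at this
      exact hg0 this
    have hg'ne : g.derivative ≠ 0 := by
      intro h
      have := natDegree_eq_zero_of_derivative_eq_zero h
      omega
    -- support of g' has at most n elements
    have hsuppg' : g.derivative.support.card ≤ n := by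
      have hinj : Set.InjOn (· + 1) g.derivative.support := fun a _ b _ h => by simpa using h
      have hmap : ∀ k ∈ g.derivative.support, k + 1 ∈ g.support.erase 0 := by
        intro k hk
        have hk' : g.derivative.coeff k ≠ 0 := mem_support_iff.mp hk
        rw [coeff_derivative] at hk'
        have : g.coeff (k + 1) ≠ 0 := fun h => hk' (by simp [h])
        exact Finset.mem_erase.mpr ⟨by omega, mem_support_iff.mpr this⟩
      have := Finset.card_le_card_of_injOn _ hmap hinj
      have hzero : 0 ∈ g.support := mem_support_iff.mpr hg0
      have := Finset.card_erase_of_mem hzero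
      omega
    obtain ⟨T, hT1, hT2, hT3⟩ := rolle_finset g S hpos hgroot
    have := ih g.derivative hg'ne hsuppg' T hT2 hT3
    omega

theorem stmt_8 (N : ℕ) (γ : Fin N → ℕ) (hγ : StrictMono γ) :
    (∃ p : Polynomial ℝ, p ≠ 0 ∧
        ∀ s : ℝ, p.eval s = (Matrix.of fun i j : Fin N => (s + (j : ℕ)) ^ γ i).det) ∧
      {s : ℝ | (Matrix.of fun i j : Fin N => (s + (j : ℕ)) ^ γ i).det = 0}.Finite := by
  classical
  set M : Matrix (Fin N) (Fin N) (Polynomial ℝ) :=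
    Matrix.of fun i j : Fin N => (X + C ((j : ℕ) : ℝ)) ^ γ i with hM
  set P : Polynomial ℝ := M.det with hP
  have hEval : ∀ s : ℝ, P.eval s = (Matrix.of fun i j : Fin N => (s + (j : ℕ)) ^ γ i).det := by
    intro s
    calc P.eval s = (Polynomial.evalRingHom s) M.det := rfl
      _ = ((Polynomial.evalRingHom s).mapMatrix M).det := RingHom.map_det _ M
      _ = (Matrix.of fun i j : Fin N => (s + (j : ℕ)) ^ γ i).det := by
          congr 1
          ext i j
          simp [hM, RingHom.mapMatrix_apply, Matrix.map_apply]
  have hPne : P ≠ 0 := by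
    intro hP0
    have hdet : M.det = 0 := hP0
    obtain ⟨v, hvne, hv⟩ := Matrix.exists_vecMul_eq_zero_iff.mpr hdet
    obtain ⟨i₀, hi₀'⟩ := Function.ne_iff.mp hvne
    have hi₀ : v i₀ ≠ 0 := by simpa using hi₀'
    -- choose a positive point where v i₀ does not vanish
    have hfin : {x : ℝ | (v i₀).IsRoot x}.Finite := Polynomial.finite_setOf_isRoot hi₀
    obtain ⟨s₀, hs₀⟩ := ((Set.Ioi_infinite (0 : ℝ)).diff hfin).nonempty
    have hs₀pos : (0 : ℝ) < s₀ := hs₀.1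
    have hs₀root : (v i₀).eval s₀ ≠ 0 := hs₀.2
    set q : Polynomial ℝ := ∑ i : Fin N, C ((v i).eval s₀) * X ^ γ i with hq
    have hqcoeff : q.coeff (γ i₀) = (v i₀).eval s₀ := by
      rw [hq, finset_sum_coeff]
      rw [Finset.sum_eq_single i₀]
      · simp
      · intro b _ hb
        simp [coeff_X_pow, (hγ.injective.ne (Ne.symm hb) : γ i₀ ≠ γ b)]
      · simp
    have hqne : q ≠ 0 := fun h => hs₀root (by rw [← hqcoeff, h, coeff_zero])
    have hqsupp : q.support.card ≤ N := by
      have hsub : q.support ⊆ Finset.image γ Finset.univ := by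
        intro k hk
        have hk' : q.coeff k ≠ 0 := mem_support_iff.mp hk
        rw [hq, finset_sum_coeff] at hk'
        obtain ⟨i, _, hki⟩ := Finset.exists_ne_zero_of_sum_ne_zero hk'
        rw [coeff_C_mul, coeff_X_pow] at hki
        have : k = γ i := by by_contra h; simp [h] at hki
        exact this ▸ Finset.mem_image_of_mem γ (Finset.mem_univ i)
      calc q.support.card ≤ (Finset.image γ Finset.univ).card := Finset.card_le_card hsub
        _ ≤ Finset.univ.card := Finset.card_image_le
        _ = N := by simp
    -- the points s₀ + j are distinct positive roots of q
    set S : Finset ℝ := Finset.image (fun j : Fin N => s₀ + ((j : ℕ) : ℝ)) Finset.univ with hS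
    have hSinj : Function.Injective (fun j : Fin N => s₀ + ((j : ℕ) : ℝ)) := by
      intro a b hab
      simp only [add_right_inj] at hab
      exact Fin.ext (Nat.cast_injective hab)
    have hScard : S.card = N := by
      rw [hS, Finset.card_image_of_injective _ hSinj]; simp
    have hSpos : ∀ r ∈ S, 0 < r := by
      intro r hr
      obtain ⟨j, _, rfl⟩ := Finset.mem_image.mp hr
      positivity
    have hSroot : ∀ r ∈ S, q.eval r = 0 := by
      intro r hr
      obtain ⟨j, _, rfl⟩ := Finset.mem_image.mp hr
      have hvj : Matrix.vecMul v M j = 0 := congrFun hv j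
      have hvj' : (∑ i : Fin N, v i * (X + C ((j : ℕ) : ℝ)) ^ γ i) = 0 := by
        rw [← hvj]
        simp [Matrix.vecMul, dotProduct, hM]

      have h1 := congrArg (Polynomial.eval s₀) hvj'
      rw [Polynomial.eval_zero] at h1
      have h2 : (∑ i : Fin N, (v i).eval s₀ * (s₀ + ((j : ℕ) : ℝ)) ^ γ i) = 0 := by
        rw [← h1, eval_finset_sum]
        refine Finset.sum_congr rfl fun i _ => ?_
        simp
      rw [hq, eval_finset_sum, ← h2]
      refine Finset.sum_congr rfl fun i _ => ?_
      simp
    have := descartes N q hqne hqsupp S hSpos hSroot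
    omega
  refine ⟨⟨P, hPne, hEval⟩, ?_⟩
  have : {s : ℝ | (Matrix.of fun i j : Fin N => (s + (j : ℕ)) ^ γ i).det = 0}
      ⊆ {x : ℝ | P.IsRoot x} := by
    intro s hs
    simp only [Set.mem_setOf_eq] at hs ⊢
    rw [Polynomial.IsRoot, hEval s, hs]
  exact (Polynomial.finite_setOf_isRoot hPne).subset this
end

section
/- Let μ be a finite complex Borel measure supported in the interval [α, α+1] whose Fourier–Stieltjes transform μ̂(x) = ∫ e^{-2πixt} dμ(t) vanishes at every integer. Then μ = A(δ_α − δ_{α+1}) for some complex constant A. -/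
open MeasureTheory Complex Real

/-- A general complex measure `μ` supported in `[α, α+1]` is represented as `f dν`
with `ν` a finite positive measure and `f` an integrable density. If its
Fourier–Stieltjes transform vanishes on `ℤ`, then `μ = A (δ_α - δ_{α+1})`,
in the sense that integrals of continuous functions against `μ` agree with those
against `A (δ_α - δ_{α+1})`. -/
theorem stmt_9 (α : ℝ) (ν : Measure ℝ) [IsFiniteMeasure ν] (f : ℝ → ℂ)
    (hf : Integrable f ν)
    (hsupp : ν (Set.Icc α (α + 1))ᶜ = 0)
    (hhat : ∀ n : ℤ,
      ∫ t, Complex.exp (-2 * (Real.pi : ℂ) * Complex.I * (n : ℂ) * (t : ℂ)) * f t ∂ν = 0) :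
    ∃ A : ℂ, ∀ g : ℝ → ℂ, Continuous g →
      ∫ t, g t * f t ∂ν = A * (g α - g (α + 1)) := by
  haveI : Fact ((0:ℝ) < 1) := ⟨one_pos⟩
  have hae : ∀ᵐ t ∂ν, t ∈ Set.Icc α (α + 1) := by
    rw [ae_iff]
    exact hsupp
  -- integrability of (continuous) * f
  have hInt : ∀ g : ℝ → ℂ, Continuous g → Integrable (fun t => g t * f t) ν := by
    intro g hg
    obtain ⟨C, hC⟩ := isCompact_Icc.exists_bound_of_continuousOn
      (s := Set.Icc α (α + 1)) hg.continuousOn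
    refine hf.bdd_mul (c := C) hg.aestronglyMeasurable ?_
    filter_upwards [hae] with t ht
    exact hC t ht
  -- the key step: integration against any continuous function on the circle vanishes
  have key : ∀ G : C(AddCircle (1:ℝ), ℂ), ∫ t, G t * f t ∂ν = 0 := by
    set Φ : C(AddCircle (1:ℝ), ℂ) → ℂ := fun G => ∫ t, G t * f t ∂ν with hΦ
    have hIntG : ∀ G : C(AddCircle (1:ℝ), ℂ), Integrable (fun t : ℝ => G t * f t) ν :=
      fun G => hInt _ (G.continuous.comp (AddCircle.continuous_mk' 1))
    have hΦcont : Continuous Φ := by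
      refine LipschitzWith.continuous
        (K := (∫ t, ‖f t‖ ∂ν).toNNReal) (LipschitzWith.of_dist_le_mul fun G H => ?_)
      rw [dist_eq_norm]
      have hdiff : Φ G - Φ H = ∫ t, ((G : AddCircle (1:ℝ) → ℂ) t - H t) * f t ∂ν := by
        rw [hΦ]
        simp only
        rw [← integral_sub (hIntG G) (hIntG H)]
        congr 1
        funext t
        ring
      rw [hdiff]
      calc ‖∫ t, ((G : AddCircle (1:ℝ) → ℂ) t - H t) * f t ∂ν‖
          ≤ ∫ t, ‖((G : AddCircle (1:ℝ) → ℂ) t - H t) * f t‖ ∂ν :=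
            norm_integral_le_integral_norm _
        _ ≤ ∫ t, dist G H * ‖f t‖ ∂ν := by
            refine integral_mono_of_nonneg (Filter.Eventually.of_forall fun t => norm_nonneg _)
              (hf.norm.const_mul _) (Filter.Eventually.of_forall fun t => ?_)
            show ‖((G : AddCircle (1:ℝ) → ℂ) t - H t) * f t‖ ≤ dist G H * ‖f t‖
            rw [norm_mul]
            gcongr
            rw [← dist_eq_norm]
            exact ContinuousMap.dist_apply_le_dist _
        _ = (∫ t, ‖f t‖ ∂ν) * dist G H := by rw [integral_const_mul]; ring
        _ ≤ ((∫ t, ‖f t‖ ∂ν).toNNReal : ℝ) * dist G H := by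
            gcongr
            exact Real.le_coe_toNNReal _
    let S : Submodule ℂ C(AddCircle (1:ℝ), ℂ) :=
      { carrier := {G | Φ G = 0}
        add_mem' := by
          intro a b ha hb
          simp only [Set.mem_setOf_eq, hΦ] at ha hb ⊢
          have : ∀ t : ℝ, ((a + b : C(AddCircle (1:ℝ), ℂ)) : AddCircle (1:ℝ) → ℂ) t * f t
              = a t * f t + b t * f t := by
            intro t; simp [add_mul]
          simp_rw [this]
          rw [integral_add (hIntG a) (hIntG b), ha, hb, add_zero]
        zero_mem' := by simp [hΦ]
        smul_mem' := by
          intro c a ha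
          simp only [Set.mem_setOf_eq, hΦ] at ha ⊢
          have : ∀ t : ℝ, ((c • a : C(AddCircle (1:ℝ), ℂ)) : AddCircle (1:ℝ) → ℂ) t * f t
              = c * (a t * f t) := by
            intro t; simp [mul_assoc]
          simp_rw [this]
          rw [integral_const_mul, ha, mul_zero] }
    have hclosed : IsClosed (S : Set C(AddCircle (1:ℝ), ℂ)) := by
      have : (S : Set C(AddCircle (1:ℝ), ℂ)) = Φ ⁻¹' {0} := rfl
      rw [this]
      exact isClosed_singleton.preimage hΦcont
    have hspan : Submodule.span ℂ (Set.range (@fourier 1)) ≤ S := by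
      rw [Submodule.span_le]
      rintro _ ⟨n, rfl⟩
      show Φ (fourier n) = 0
      rw [hΦ]
      have h := hhat (-n)
      rw [← h]
      refine integral_congr_ae (Filter.Eventually.of_forall fun t => ?_)
      show (fourier n) ((t : ℝ) : AddCircle (1:ℝ)) * f t
        = Complex.exp (-2 * (π:ℂ) * Complex.I * (((-n : ℤ)):ℂ) * (t:ℂ)) * f t
      have harg : (2 * (π:ℂ) * Complex.I * (n:ℂ) * (t:ℂ) / (1:ℝ))
          = -2 * (π:ℂ) * Complex.I * (((-n : ℤ)):ℂ) * (t:ℂ) := by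
        push_cast
        ring
      rw [fourier_coe_apply, harg]
    have htop : (⊤ : Submodule ℂ C(AddCircle (1:ℝ), ℂ)) ≤ S := by
      rw [← span_fourier_closure_eq_top]
      exact Submodule.topologicalClosure_minimal _ hspan hclosed
    intro G
    exact htop Submodule.mem_top
  -- integration against a continuous function with equal endpoint values vanishes
  have key2 : ∀ g : ℝ → ℂ, Continuous g → g α = g (α + 1) →
      ∫ t, g t * f t ∂ν = 0 := by
    intro g hg hend
    have hc : Continuous (AddCircle.liftIco 1 α g) :=
      AddCircle.liftIco_continuous (by rw [hend]) hg.continuousOn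
    have hG := key ⟨_, hc⟩
    rw [← hG]
    refine integral_congr_ae ?_
    filter_upwards [hae] with t ht
    rcases eq_or_lt_of_le ht.2 with h | h
    · have hcoe : ((t : ℝ) : AddCircle (1:ℝ)) = ((α : ℝ) : AddCircle (1:ℝ)) := by
        rw [h]
        exact AddCircle.coe_add_period 1 α
      simp only [ContinuousMap.coe_mk]
      rw [hcoe, AddCircle.liftIco_coe_apply ⟨le_refl α, by linarith⟩, h, hend]
    · simp only [ContinuousMap.coe_mk]
      rw [AddCircle.liftIco_coe_apply ⟨ht.1, h⟩]
  -- conclude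
  refine ⟨∫ t, (-(t:ℂ)) * f t ∂ν, fun g hg => ?_⟩
  set c : ℂ := g α - g (α + 1) with hc
  have hℓ : Continuous fun t : ℝ => -(t:ℂ) := continuous_ofReal.neg
  have hgl : Continuous fun t : ℝ => g t - c * (-(t:ℂ)) := hg.sub (continuous_const.mul hℓ)
  have h0 : (fun t : ℝ => g t - c * (-(t:ℂ))) α = (fun t : ℝ => g t - c * (-(t:ℂ))) (α + 1) := by
    simp only [hc]
    push_cast
    ring
  have hz := key2 _ hgl h0
  have hint1 := hInt g hg
  have hint2 : Integrable (fun t : ℝ => (-(t:ℂ)) * f t) ν := hInt _ hℓ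
  have hexp : ∫ t, (g t - c * (-(t:ℂ))) * f t ∂ν
      = (∫ t, g t * f t ∂ν) - c * ∫ t, (-(t:ℂ)) * f t ∂ν := by
    have : ∀ t : ℝ, (g t - c * (-(t:ℂ))) * f t = g t * f t - c * ((-(t:ℂ)) * f t) := by
      intro t; ring
    simp_rw [this]
    rw [integral_sub hint1 (hint2.const_mul c), integral_const_mul]
  rw [hexp] at hz
  have : ∫ t, g t * f t ∂ν = c * ∫ t, (-(t:ℂ)) * f t ∂ν := by
    rwa [sub_eq_zero] at hz
  rw [this]
  exact mul_comm c _
end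

section
/- Let f: ℂ → ℂ be an entire function satisfying |f(x+iy)| ≤ C e^{π|y|} for all real x, y, and suppose f vanishes at every integer. Then f(z) = c·sin(πz) for some constant c. -/
/-! Every zero of `sin (π z)` is simple and `f` vanishes there, so `f = h · sin (π ·)` with `h`
entire. Since `‖sin (x + iy)‖² = sin² x + sinh² y`, we have `‖sin (π z)‖ ≥ exp (π |Im z|) / 4`
both for `|Im z| ≥ 1` and on the lines `Re z ∈ ℤ + 1/2`, so the growth bound on `f` gives
`‖h‖ ≤ 4C` on this grid. The maximum principle on each cell `[n - 1/2, n + 1/2] × [-1, 1]`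
extends the bound to all of `ℂ`, and Liouville's theorem makes `h` constant. -/

open Complex Real Set Filter Topology

theorem exists_eq_mul_of_simple_zeros {f g : ℂ → ℂ} (hf : Differentiable ℂ f)
    (hg : Differentiable ℂ g) (hfg : ∀ z, g z = 0 → f z = 0)
    (hg' : ∀ z, g z = 0 → deriv g z ≠ 0) :
    ∃ h : ℂ → ℂ, Differentiable ℂ h ∧ ∀ z, f z = h z * g z := by
  set q : ℂ → ℂ := fun z => if g z = 0 then deriv f z / deriv g z else f z / g z
  refine ⟨q, fun a => ?_, fun z => ?_⟩
  · by_cases ha : g a = 0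
    · have hdf := (differentiableOn_dslope (f := f) (c := a) univ_mem).2 hf.differentiableOn
      have hdg := (differentiableOn_dslope (f := g) (c := a) univ_mem).2 hg.differentiableOn
      have hdga : dslope g a a ≠ 0 := by rw [dslope_same]; exact hg' a ha
      have hne : ∀ᶠ z in 𝓝 a, dslope g a z ≠ 0 :=
        (hdg.differentiableAt univ_mem).continuousAt.eventually_ne hdga
      have heq : q =ᶠ[𝓝 a] fun z => dslope f a z / dslope g a z := by
        filter_upwards [hne] with z hz
        rcases eq_or_ne z a with rfl | hza
        · simp [q, ha, dslope_same]
        · have hgz : g z = (z - a) * dslope g a z := by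
            simpa [ha] using (sub_smul_dslope g a z).symm
          have hfz : f z = (z - a) * dslope f a z := by
            simpa [hfg a ha] using (sub_smul_dslope f a z).symm
          have hza' : z - a ≠ 0 := sub_ne_zero.2 hza
          simp only [q]
          rw [if_neg (by rw [hgz]; exact mul_ne_zero hza' hz), hfz, hgz,
            mul_div_mul_left _ _ hza']
      rw [heq.differentiableAt_iff]
      exact (hdf.differentiableAt univ_mem).div (hdg.differentiableAt univ_mem) hdga
    · have heq : q =ᶠ[𝓝 a] fun z => f z / g z := by
        filter_upwards [hg.continuous.continuousAt.eventually_ne ha] with z hz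
        simp [q, hz]
      rw [heq.differentiableAt_iff]
      exact (hf a).div (hg a) ha
  · by_cases hz : g z = 0
    · simp [q, hz, hfg z hz]
    · simp [q, hz]

theorem Complex.norm_sin_sq (z : ℂ) : ‖sin z‖ ^ 2 = Real.sin z.re ^ 2 + Real.sinh z.im ^ 2 := by
  conv_lhs => rw [← re_add_im z]
  rw [sin_add_mul_I, ← ofReal_sin, ← ofReal_cos, ← ofReal_cosh, ← ofReal_sinh, ← ofReal_mul,
    ← ofReal_mul, Complex.sq_norm, normSq_add_mul_I]
  linear_combination (Real.sin z.re ^ 2) * Real.cosh_sq z.im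
    + Real.sinh z.im ^ 2 * Real.sin_sq_add_cos_sq z.re

theorem Complex.exp_abs_im_div_four_le_norm_sin {w : ℂ}
    (hw : 1 ≤ |w.im| ∨ |Real.sin w.re| = 1) : Real.exp |w.im| / 4 ≤ ‖sin w‖ := by
  set s := |w.im|
  have hsq : ‖sin w‖ ^ 2 = Real.sin w.re ^ 2 + Real.sinh s ^ 2 := by
    rw [norm_sin_sq, ← sq_abs (Real.sinh _), Real.abs_sinh]
  have hexp : Real.exp s * Real.exp (-s) = 1 := by rw [← Real.exp_add]; simp
  have hsinh : Real.sinh s = (Real.exp s - Real.exp (-s)) / 2 := Real.sinh_eq s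
  have hpos := Real.exp_pos s
  have hpos' := Real.exp_pos (-s)
  refine (sq_le_sq₀ (by positivity) (norm_nonneg _)).1 ?_
  rw [hsq]
  rcases hw with hs | hsin
  · have h2 : 2 ≤ Real.exp s := by linarith [Real.add_one_le_exp s]
    nlinarith [sq_nonneg (Real.sin w.re)]
  · rw [← sq_abs (Real.sin _), hsin]
    nlinarith

theorem abs_sin_pi_mul_int_add_half (n : ℤ) : |Real.sin (π * (n + 1 / 2))| = 1 := by
  rw [show π * (n + 1 / 2) = n * π + π / 2 by ring, Real.sin_add_pi_div_two,
    Real.abs_cos_int_mul_pi]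

theorem Complex.norm_le_of_forall_norm_le_on_grid {h : ℂ → ℂ} (hh : Differentiable ℂ h)
    {M : ℝ} (hM : ∀ w : ℂ, (1 ≤ |w.im| ∨ ∃ n : ℤ, w.re = n + 1 / 2) → ‖h w‖ ≤ M) (z : ℂ) :
    ‖h z‖ ≤ M := by
  by_cases hz : 1 ≤ |z.im|
  · exact hM z (Or.inl hz)
  set n := round z.re
  refine norm_le_of_forall_mem_frontier_norm_le
    (U := Ioo ((n : ℝ) - 1 / 2) (n + 1 / 2) ×ℂ Ioo (-1) 1)
    ((Metric.isBounded_Ioo _ _).reProdIm (Metric.isBounded_Ioo _ _)) hh.diffContOnCl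
    (fun w hw => hM w ?_) ?_
  · rw [frontier_reProdIm, frontier_Ioo (by norm_num), frontier_Ioo (by linarith)] at hw
    rcases hw with ⟨-, hw⟩ | ⟨hw, -⟩
    · left
      rcases (hw : w.im = -1 ∨ w.im = 1) with hw | hw <;> rw [hw] <;> norm_num
    · right
      rcases hw with hw | hw
      · exact ⟨n - 1, by push_cast; rw [hw]; ring⟩
      · exact ⟨n, hw⟩
  · rw [closure_reProdIm, closure_Ioo (by linarith), closure_Ioo (by norm_num)]
    have := abs_sub_round z.re
    rw [abs_le] at this
    rw [not_le, abs_lt] at hz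
    exact ⟨⟨by linarith, by linarith⟩, ⟨by linarith, by linarith⟩⟩

theorem Complex.sin_pi_mul_eq_zero_iff {z : ℂ} : sin (π * z) = 0 ↔ ∃ n : ℤ, z = n := by
  rw [sin_eq_zero_iff]
  refine exists_congr fun n => ?_
  rw [mul_comm (n : ℂ), mul_right_inj' (ofReal_ne_zero.2 pi_ne_zero)]

theorem Complex.deriv_sin_pi_mul (z : ℂ) : deriv (fun w => sin (π * w)) z = π * cos (π * z) := by
  simp [mul_comm]

theorem Complex.cos_ne_zero_of_sin_eq_zero {z : ℂ} (hz : sin z = 0) : cos z ≠ 0 := fun h => by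
  simpa [hz, h] using sin_sq_add_cos_sq z

theorem stmt_11 (f : ℂ → ℂ) (hf : Differentiable ℂ f) (C : ℝ)
    (hbd : ∀ x y : ℝ, ‖f (x + y * Complex.I)‖ ≤ C * Real.exp (Real.pi * |y|))
    (hz : ∀ n : ℤ, f (n : ℂ) = 0) :
    ∃ c : ℂ, ∀ z : ℂ, f z = c * Complex.sin ((Real.pi : ℂ) * z) := by
  obtain ⟨h, hh, hfh⟩ := exists_eq_mul_of_simple_zeros (g := fun z => sin (π * z)) hf
    (by fun_prop)
    (fun z hsin => by obtain ⟨n, rfl⟩ := sin_pi_mul_eq_zero_iff.1 hsin; exact hz n)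
    (fun z hsin => by
      rw [deriv_sin_pi_mul]
      exact mul_ne_zero (ofReal_ne_zero.2 pi_ne_zero) (cos_ne_zero_of_sin_eq_zero hsin))
  have hgrid : ∀ w : ℂ, (1 ≤ |w.im| ∨ ∃ n : ℤ, w.re = n + 1 / 2) → ‖h w‖ ≤ 4 * C := by
    intro w hw
    have hlow : Real.exp (π * |w.im|) / 4 ≤ ‖sin (π * w)‖ := by
      have := exp_abs_im_div_four_le_norm_sin (w := π * w) ?_
      · simpa [abs_mul, abs_of_pos pi_pos] using this
      rcases hw with hw | ⟨n, hn⟩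
      · left
        rw [im_ofReal_mul, abs_mul, abs_of_pos pi_pos]
        nlinarith [pi_gt_three]
      · right
        rw [re_ofReal_mul, hn, abs_sin_pi_mul_int_add_half]
    have hup : ‖h w‖ * ‖sin (π * w)‖ ≤ C * Real.exp (π * |w.im|) := by
      simpa [hfh, re_add_im] using hbd w.re w.im
    nlinarith [Real.exp_pos (π * |w.im|), norm_nonneg (h w)]
  have hbdd : Bornology.IsBounded (range h) := isBounded_iff_forall_norm_le.2
    ⟨4 * C, by rintro _ ⟨w, rfl⟩; exact norm_le_of_forall_norm_le_on_grid hh hgrid w⟩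
  exact ⟨h 0, fun z => by rw [hfh, hh.apply_eq_apply_of_bounded hbdd z 0]⟩
end

section
/- Let Γ be a finite set of nonnegative integers with 0 ∈ Γ, #Γ = N, and let a, b be reals with b − a ≤ N. If F ∈ L²(a,b) satisfies ∫_a^b t^γ e^{-2πint} F(t) dt = 0 for all γ ∈ Γ and all n ∈ ℤ, then F = 0 almost everywhere. Equivalently, the system {t^γ e^{2πint} : n ∈ ℤ, γ ∈ Γ} is complete in L²(a,b). -/
/-!
Put `G = F · 1_(a,b)` and periodize the weighted functions: `P_γ(s) = ∑ₖ (s + k)^γ G(s + k)`.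
Unfolding the integral over `(0, 1]`, the Fourier coefficients of `P_γ` are the given moments of
`F`, so `P_γ = 0` a.e. by Parseval. For fixed `s` at most `N` nodes `s + k` lie in `(a, b)`,
because `b - a ≤ N`, so the equations `P_γ(s) = 0`, `γ ∈ Γ`, form a generalized Vandermonde
system for the values `G(s + k)` with at least as many equations as unknowns. Its determinant is
a polynomial in `s` that is not identically zero: for large `s` all nodes are positive, and
monomials with distinct exponents form a Chebyshev system on `(0, ∞)` (Rolle). Hence for all but
countably many `s` the system forces `G(s + k) = 0`.
-/

open MeasureTheory Complex Real Set Filter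

theorem exists_strictMono_hasDerivAt_eq_zero {m : ℕ} {f f' : ℝ → ℝ}
    (hf : ∀ t, HasDerivAt f (f' t) t) {x : Fin (m + 1) → ℝ} (hx : StrictMono x)
    (hfx : ∀ i, f (x i) = 0) :
    ∃ y : Fin m → ℝ, StrictMono y ∧ (∀ i, x 0 < y i) ∧ ∀ i, f' (y i) = 0 := by
  have hrolle : ∀ i : Fin m, ∃ y ∈ Ioo (x i.castSucc) (x i.succ), f' y = 0 := fun i =>
    exists_hasDerivAt_eq_zero (hx Fin.castSucc_lt_succ)
      (fun t _ => (hf t).continuousAt.continuousWithinAt) (by rw [hfx, hfx]) (fun t _ => hf t)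
  choose y hy hy' using hrolle
  refine ⟨y, fun i j hij => ?_, fun i => ?_, hy'⟩
  · calc y i < x i.succ := (hy i).2
      _ ≤ x j.castSucc := hx.monotone (Fin.succ_le_castSucc_iff.mpr hij)
      _ < y j := (hy j).1
  · exact (hx.monotone (Fin.zero_le _)).trans_lt (hy i).1

theorem eq_zero_of_forall_sum_mul_pow_eq_zero {m : ℕ} {e : Fin m → ℕ} (he : StrictMono e)
    {x : Fin m → ℝ} (hx : StrictMono x) (hx₀ : ∀ i, 0 < x i) {c : Fin m → ℝ}
    (hc : ∀ i, ∑ j, c j * x i ^ e j = 0) : c = 0 := by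
  induction m with
  | zero => exact Subsingleton.elim _ _
  | succ m ih =>
    have he₀ : ∀ j, e 0 ≤ e j := fun j => he.monotone (Fin.zero_le j)
    set d : Fin (m + 1) → ℕ := fun j => e j - e 0
    have hd : ∀ j : Fin m, 1 ≤ d j.succ := fun j =>
      Nat.sub_pos_of_lt (he (Fin.succ_pos j))
    -- dividing by `t ^ e 0` makes the lowest exponent zero, so differentiation kills `c 0`
    set g : ℝ → ℝ := fun t => ∑ j, c j * t ^ d j
    have hg : ∀ i, g (x i) = 0 := by
      intro i
      refine (mul_eq_zero.mp ?_).resolve_left (pow_ne_zero (e 0) (hx₀ i).ne')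
      rw [← hc i, Finset.mul_sum]
      refine Finset.sum_congr rfl fun j _ => ?_
      rw [← pow_sub_mul_pow (x i) (he₀ j)]
      ring
    have hg' : ∀ t, HasDerivAt g (∑ j : Fin m, c j.succ * d j.succ * t ^ (d j.succ - 1)) t := by
      intro t
      have : HasDerivAt g (∑ j, c j * (d j * t ^ (d j - 1))) t :=
        HasDerivAt.fun_sum fun j _ => (hasDerivAt_pow (d j) t).const_mul (c j)
      simpa [Fin.sum_univ_succ, d, mul_assoc] using this
    obtain ⟨y, hy, hxy, hy'⟩ := exists_strictMono_hasDerivAt_eq_zero hg' hx hg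
    have hmono : StrictMono fun j : Fin m => d j.succ - 1 := fun i j hij => by
      have := he (Fin.succ_lt_succ_iff.mpr hij)
      have := he (Fin.succ_pos i)
      dsimp only [d]
      omega
    have hsucc : ∀ j : Fin m, c j.succ = 0 := fun j => by
      have := congrFun (ih hmono hy (fun i => (hx₀ 0).trans (hxy i)) hy') j
      simpa [Nat.one_le_iff_ne_zero.mp (hd j)] using this
    have h₀ : c 0 * x 0 ^ e 0 = 0 := by simpa [Fin.sum_univ_succ, hsucc] using hc 0
    funext j
    refine Fin.cases ?_ hsucc j
    exact (mul_eq_zero.mp h₀).resolve_right (pow_ne_zero _ (hx₀ 0).ne')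

theorem det_of_pow_ne_zero {m : ℕ} {e : Fin m → ℕ} (he : StrictMono e)
    {x : Fin m → ℝ} (hx : StrictMono x) (hx₀ : ∀ i, 0 < x i) :
    (Matrix.of fun i j => x i ^ e j).det ≠ 0 := by
  intro h
  obtain ⟨c, hc, hMc⟩ := Matrix.exists_mulVec_eq_zero_iff.mpr h
  refine hc (eq_zero_of_forall_sum_mul_pow_eq_zero he hx hx₀ fun i => ?_)
  simpa [Matrix.mulVec, dotProduct, mul_comm] using congrFun hMc i

open Polynomial in
theorem finite_setOf_det_of_add_pow_eq_zero {m : ℕ} {e : Fin m → ℕ} (he : StrictMono e)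
    {x : Fin m → ℝ} (hx : StrictMono x) :
    {s : ℝ | (Matrix.of fun i j => (s + x i) ^ e j).det = 0}.Finite := by
  set Q : ℝ[X] := (Matrix.of fun i j => (X + C (x i)) ^ e j).det
  have hQ : ∀ s, Q.eval s = (Matrix.of fun i j => (s + x i) ^ e j).det := by
    intro s
    rw [← coe_evalRingHom, RingHom.map_det]
    congr 1
    ext i j
    simp
  -- at a shift making all nodes positive, `Q` is a nonzero generalized Vandermonde determinant
  have hQ₀ : Q ≠ 0 := by
    set s₀ := 1 + ∑ i, |x i|
    have hpos : ∀ i, 0 < s₀ + x i := fun i => by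
      have := Finset.single_le_sum (fun j _ => abs_nonneg (x j)) (Finset.mem_univ i)
      linarith [neg_abs_le (x i)]
    intro h
    refine det_of_pow_ne_zero he (fun i j hij => (add_lt_add_iff_left s₀).2 (hx hij)) hpos ?_
    rw [← hQ, h, eval_zero]
  refine (finite_setOfPred_isRoot hQ₀).subset fun s hs => ?_
  simpa [IsRoot, hQ] using hs

theorem eventually_cofinite_forall_sum_mul_add_pow_eq_zero {X : Finset ℝ} {Γ : Finset ℕ}
    (hX : X.card ≤ Γ.card) :
    ∀ᶠ s in cofinite, ∀ c : ℝ → ℂ,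
      (∀ γ ∈ Γ, ∑ x ∈ X, c x * ((s + x : ℝ) : ℂ) ^ γ = 0) →
        ∀ x ∈ X, c x = 0 := by
  obtain ⟨T, hTΓ, hT⟩ := Finset.exists_subset_card_eq hX
  set eX := X.orderIsoOfFin rfl
  set eT := T.orderIsoOfFin hT
  have hfin := finite_setOf_det_of_add_pow_eq_zero (x := fun i => (eX i : ℝ))
    (e := fun j => (eT j : ℕ)) (fun _ _ h => eT.strictMono h) (fun _ _ h => eX.strictMono h)
  filter_upwards [hfin.eventually_cofinite_notMem] with s hs c hc
  set M : Matrix (Fin X.card) (Fin X.card) ℂ :=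
    Matrix.of fun i j => ((s + eX i : ℝ) : ℂ) ^ (eT j : ℕ)
  have hM : M.det ≠ 0 := by
    have : M.det = ((Matrix.of fun i j => (s + eX i) ^ (eT j : ℕ)).det : ℂ) := by
      rw [← ofRealHom_eq_coe, RingHom.map_det]
      congr 1
      ext i j
      simp [M]
    rw [this]
    exact_mod_cast hs
  have hv : (fun i => c (eX i)) = 0 := by
    refine Matrix.eq_zero_of_vecMul_eq_zero hM (funext fun j => ?_)
    rw [Pi.zero_apply, ← hc _ (hTΓ (eT j).2), ← Finset.sum_coe_sort X, ← eX.toEquiv.sum_comp]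
    rfl
  intro x hx
  simpa using congrFun hv (eX.symm ⟨x, hx⟩)

theorem card_le_of_forall_intCast_mem_Ioo {K : Finset ℤ} {u v : ℝ} {N : ℕ}
    (hK : ∀ k ∈ K, (k : ℝ) ∈ Ioo u v) (huv : v - u ≤ N) : K.card ≤ N := by
  have hsub : K ⊆ Finset.Ioo ⌊u⌋ ⌈v⌉ := fun k hk => Finset.mem_Ioo.2
    ⟨Int.cast_lt.1 ((Int.floor_le u).trans_lt (hK k hk).1),
      Int.cast_lt.1 ((hK k hk).2.trans_le (Int.le_ceil v))⟩
  have hlen : ((⌈v⌉ - ⌊u⌋ : ℤ) : ℝ) < N + 2 := by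
    push_cast
    linarith [Int.ceil_lt_add_one v, Int.sub_one_lt_floor u]
  have hlen' : ⌈v⌉ - ⌊u⌋ < N + 2 := by exact_mod_cast hlen
  have := (Finset.card_le_card hsub).trans_eq (Int.card_Ioo _ _)
  omega

theorem ae_forall_eq_zero_of_forall_sum_pow_mul_eq_zero {Γ : Finset ℕ} {u v : ℝ}
    (huv : v - u ≤ Γ.card) {G : ℝ → ℂ} (hG : ∀ t ∉ Ioo u v, G t = 0) (K : Finset ℤ) :
    ∀ᵐ s, (∀ γ ∈ Γ, ∑ k ∈ K, ((s + k : ℝ) : ℂ) ^ γ * G (s + k) = 0) →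
      ∀ k ∈ K, G (s + k) = 0 := by
  have hgeneric : ∀ᵐ s, ∀ L : Finset ℤ, L.card ≤ Γ.card → ∀ c : ℝ → ℂ,
      (∀ γ ∈ Γ, ∑ x ∈ L.image (↑), c x * ((s + x : ℝ) : ℂ) ^ γ = 0) →
        ∀ x ∈ L.image (↑), c x = 0 := by
    refine ae_all_iff.2 fun L => eventually_imp_distrib_left.2 fun hL => ae_iff.2 ?_
    refine (eventually_cofinite.1 ?_).measure_zero _
    refine eventually_cofinite_forall_sum_mul_add_pow_eq_zero ?_
    rwa [Finset.card_image_of_injective _ Int.cast_injective]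
  filter_upwards [hgeneric] with s hs hsum k hk
  by_cases hks : s + k ∈ Ioo u v
  case neg => exact hG _ hks
  -- only the nodes `s + k` inside `(u, v)` contribute, and there are at most `#Γ` of them
  set L := K.filter fun k : ℤ => s + k ∈ Ioo u v
  have hL : L.card ≤ Γ.card := card_le_of_forall_intCast_mem_Ioo
    (u := u - s) (v := v - s) (fun k hk => by
      obtain ⟨h₁, h₂⟩ := (Finset.mem_filter.1 hk).2
      constructor <;> linarith) (by linarith)
  refine hs L hL (fun x => G (s + x)) (fun γ hγ => ?_) k
    (Finset.mem_image_of_mem _ (Finset.mem_filter.2 ⟨hk, hks⟩))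
  rw [Finset.sum_image fun _ _ _ _ h => Int.cast_injective h, Finset.sum_filter]
  refine (Finset.sum_congr rfl fun j _ => ?_).trans (hsum γ hγ)
  split_ifs with hj
  · ring
  · rw [hG _ hj, mul_zero]

theorem measurePreserving_add_right_restrict_Ioc (c : ℝ) :
    MeasurePreserving (· + c) (volume.restrict (Ioc 0 1)) (volume.restrict (Ioc c (c + 1))) := by
  have := (measurePreserving_add_right volume c).restrict_preimage
    (measurableSet_Ioc (a := c) (b := c + 1))
  simpa using this

theorem integral_Ioc_sum_add_intCast {E : Type*} [NormedAddCommGroup E] [NormedSpace ℝ E]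
    {h : ℝ → E} (hh : Integrable h) (K : Finset ℤ) :
    ∫ s in Ioc 0 1, ∑ k ∈ K, h (s + k) =
      ∫ t in ⋃ k ∈ K, Ioc (k : ℝ) (k + 1), h t := by
  rw [integral_finsetSum _ fun k _ => (hh.comp_add_right _).integrableOn,
    integral_biUnion_finset K (fun _ _ => measurableSet_Ioc)
      (fun j _ k _ hjk => by simpa using pairwise_disjoint_Ioc_add_intCast (0 : ℝ) hjk)
      fun _ _ => hh.integrableOn]
  exact Finset.sum_congr rfl fun k _ =>
    (measurePreserving_add_right_restrict_Ioc k).integral_comp (measurableEmbedding_addRight _) h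

theorem ae_restrict_biUnion_Ioc_of_ae_add_intCast {p : ℝ → Prop} {K : Finset ℤ}
    (h : ∀ᵐ s ∂volume.restrict (Ioc 0 1), ∀ k ∈ K, p (s + k)) :
    ∀ᵐ t ∂volume.restrict (⋃ k ∈ K, Ioc (k : ℝ) (k + 1)), p t := by
  refine (ae_restrict_biUnion_finset_iff _ _ _).2 fun k hk => ?_
  rw [← (measurePreserving_add_right_restrict_Ioc k).map_eq,
    (measurableEmbedding_addRight _).ae_map_iff]
  exact h.mono fun s hs => hs k hk

theorem Ioo_subset_biUnion_Ioc_intCast (a b : ℝ) :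
    Ioo a b ⊆ ⋃ k ∈ Finset.Ico ⌊a⌋ ⌈b⌉, Ioc (k : ℝ) (k + 1) := by
  intro t ht
  refine mem_biUnion (x := ⌈t⌉ - 1) (Finset.mem_Ico.2 ⟨?_, ?_⟩) ⟨?_, ?_⟩
  · have : (⌊a⌋ : ℝ) < ⌈t⌉ := (Int.floor_le a).trans_lt (ht.1.trans_le (Int.le_ceil t))
    have := Int.cast_lt.1 this
    omega
  · have := Int.ceil_mono ht.2.le
    omega
  · push_cast; linarith [Int.ceil_lt_add_one t]
  · push_cast; linarith [Int.le_ceil t]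

theorem exp_neg_two_pi_I_mul_add_intCast (n k : ℤ) (s : ℝ) :
    cexp (-2 * π * I * n * (s + k : ℝ)) = cexp (-2 * π * I * n * s) := by
  rw [← mul_one (cexp (-2 * π * I * n * s)), ← exp_int_mul_two_pi_mul_I (-(n * k)),
    ← Complex.exp_add]
  push_cast
  ring_nf

theorem fourierCoeffOn_zero_one (f : ℝ → ℂ) (n : ℤ) :
    fourierCoeffOn zero_lt_one f n =
      ∫ s in Ioc (0 : ℝ) 1, cexp (-2 * π * I * n * s) * f s := by
  rw [fourierCoeffOn_eq_integral _ _ zero_lt_one, intervalIntegral.integral_of_le zero_le_one]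
  simp only [sub_zero, div_one, one_smul, fourier_coe_apply, smul_eq_mul]
  congr with s
  push_cast
  ring_nf

theorem fourierCoeffOn_sum_add_intCast {g : ℝ → ℂ} (hg : Integrable g) (K : Finset ℤ)
    (n : ℤ) :
    fourierCoeffOn zero_lt_one (fun s => ∑ k ∈ K, g (s + k)) n =
      ∫ t in ⋃ k ∈ K, Ioc (k : ℝ) (k + 1), cexp (-2 * π * I * n * (t : ℂ)) * g t := by
  have hint : Integrable fun t : ℝ => cexp (-2 * π * I * n * t) * g t := by
    refine hg.bdd_mul (c := 1) (by fun_prop) (ae_of_all _ fun t => ?_)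
    rw [show -2 * π * I * n * t = ((-2 * π * n * t : ℝ) : ℂ) * I by push_cast; ring,
      norm_exp_ofReal_mul_I]
  rw [fourierCoeffOn_zero_one, ← integral_Ioc_sum_add_intCast hint]
  refine setIntegral_congr_fun measurableSet_Ioc fun s _ => ?_
  simp only [Finset.mul_sum]
  exact Finset.sum_congr rfl fun k _ => by rw [exp_neg_two_pi_I_mul_add_intCast]

theorem ae_eq_zero_of_fourierCoeffOn_eq_zero {a b : ℝ} (hab : a < b) {f : ℝ → ℂ}
    (hf : MemLp f 2 (volume.restrict (Ioc a b))) (h : ∀ n, fourierCoeffOn hab f n = 0) :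
    f =ᵐ[volume.restrict (Ioc a b)] 0 := by
  have hparseval := tsum_sq_fourierCoeffOn hab hf
  simp only [h, norm_zero, ne_eq, OfNat.ofNat_ne_zero, not_false_eq_true, zero_pow, tsum_zero,
    intervalIntegral.integral_of_le hab.le, smul_eq_mul, zero_eq_mul, inv_eq_zero] at hparseval
  have hnorm := (integral_eq_zero_iff_of_nonneg (fun x => by positivity)
    (hf.integrable_norm_pow two_ne_zero)).1 (hparseval.resolve_left (by linarith))
  filter_upwards [hnorm] with x hx
  simpa using hx

theorem memLp_pow_mul_indicator_Ioo {p : ENNReal} {a b : ℝ} {F : ℝ → ℂ}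
    (hF : MemLp F p (volume.restrict (Ioo a b))) (γ : ℕ) :
    MemLp (fun t : ℝ => (t : ℂ) ^ γ * (Ioo a b).indicator F t) p := by
  have : (fun t : ℝ => (t : ℂ) ^ γ * (Ioo a b).indicator F t) =
      (Ioo a b).indicator fun t => (t : ℂ) ^ γ * F t :=
    funext fun t => (indicator_mul_right (Ioo a b) (fun t : ℝ => (t : ℂ) ^ γ) F).symm
  rw [this, memLp_indicator_iff_restrict measurableSet_Ioo]
  have hpow : Continuous fun t : ℝ => (t : ℂ) ^ γ := by fun_prop
  refine hF.of_le_mul (c := max |a| |b| ^ γ) (hpow.aestronglyMeasurable.mul hF.1) ?_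
  filter_upwards [ae_restrict_mem measurableSet_Ioo] with t ht
  rw [norm_mul, norm_pow, norm_real, Real.norm_eq_abs]
  gcongr
  exact abs_le_max_abs_abs ht.1.le ht.2.le

theorem stmt_12_general (N : ℕ) (Γ : Finset ℕ) (hcard : Γ.card = N)
    (a b : ℝ) (hab : b - a ≤ N) (F : ℝ → ℂ)
    (hF : MemLp F 2 (volume.restrict (Set.Ioo a b)))
    (horth : ∀ γ ∈ Γ, ∀ n : ℤ,
      ∫ t in Set.Ioo a b,
        (t : ℂ) ^ γ * Complex.exp (-2 * (Real.pi : ℂ) * Complex.I * (n : ℂ) * (t : ℂ)) * F t = 0) :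
    ∀ᵐ t ∂(volume.restrict (Set.Ioo a b)), F t = 0 := by
  set G := (Ioo a b).indicator F
  set K := Finset.Ico ⌊a⌋ ⌈b⌉
  have hcover := Ioo_subset_biUnion_Ioc_intCast a b
  have hperiodized : ∀ γ ∈ Γ, ∀ᵐ s ∂volume.restrict (Ioc 0 1),
      ∑ k ∈ K, ((s + k : ℝ) : ℂ) ^ γ * G (s + k) = 0 := by
    intro γ hγ
    refine ae_eq_zero_of_fourierCoeffOn_eq_zero zero_lt_one ?_ fun n => ?_
    · exact (memLp_finsetSum K fun k _ => (memLp_pow_mul_indicator_Ioo hF γ)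
        |>.comp_measurePreserving (measurePreserving_add_right volume (k : ℝ))).restrict _
    have hintegrand : (fun t : ℝ => cexp (-2 * π * I * n * t) * ((t : ℂ) ^ γ * G t)) =
        (Ioo a b).indicator fun t => (t : ℂ) ^ γ * cexp (-2 * π * I * n * t) * F t := by
      ext t
      by_cases ht : t ∈ Ioo a b
      · simp only [G, indicator_of_mem ht]; ring
      · simp only [G, indicator_of_notMem ht, mul_zero]
    rw [fourierCoeffOn_sum_add_intCast (memLp_one_iff_integrable.1
      (memLp_pow_mul_indicator_Ioo (hF.mono_exponent one_le_two) γ)), hintegrand,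
      setIntegral_indicator measurableSet_Ioo, inter_eq_self_of_subset_right hcover, horth γ hγ n]
  have hzero : ∀ᵐ s ∂volume.restrict (Ioc 0 1), ∀ k ∈ K, G (s + k) = 0 := by
    filter_upwards [ae_restrict_of_ae (ae_forall_eq_zero_of_forall_sum_pow_mul_eq_zero
      (hcard ▸ hab) (fun t ht => indicator_of_notMem ht F) K),
      eventually_all_finset _ |>.2 hperiodized] with s hs hs'
    exact hs hs'
  filter_upwards [ae_restrict_of_ae_restrict_of_subset hcover
    (ae_restrict_biUnion_Ioc_of_ae_add_intCast (p := fun t => G t = 0) hzero),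
    ae_restrict_mem measurableSet_Ioo] with t ht ht'
  simpa [G, indicator_of_mem ht'] using ht

theorem stmt_12 (N : ℕ) (Γ : Finset ℕ) (h0 : 0 ∈ Γ) (hcard : Γ.card = N)
    (a b : ℝ) (hab : b - a ≤ N) (F : ℝ → ℂ)
    (hF : MemLp F 2 (volume.restrict (Set.Ioo a b)))
    (horth : ∀ γ ∈ Γ, ∀ n : ℤ,
      ∫ t in Set.Ioo a b,
        (t : ℂ) ^ γ * Complex.exp (-2 * (Real.pi : ℂ) * Complex.I * (n : ℂ) * (t : ℂ)) * F t = 0) :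
    ∀ᵐ t ∂(volume.restrict (Set.Ioo a b)), F t = 0 :=
  stmt_12_general N Γ hcard a b hab F hF horth
end

section
/- Let r > 0 and φ(x) = sin(πrx)/(πrx) (with φ(0) = 1). Then for each positive integer j there is a constant C (independent of r ≤ 1) such that Σ_{n∈ℤ} |φ^{(j)}(n)|² ≤ C^j r^j. -/
/-!
With `a = π r` we have `sinc (a x) = ∫₀¹ cos (a x t) dt`, so differentiating under the integral
sign, the `j`-th derivative is `a ^ j ∫₀¹ t ^ j cos (a x t + j π / 2) dt`. This integral is at most
`1` in absolute value, and at most `2 / |a x|` after an integration by parts, so its square at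
`x = n` is at most `5 / (1 + (a n) ^ 2)`. Comparing with `∫ dx / (1 + (a x) ^ 2) = π / a`, the sum
over `n ∈ ℤ` is at most `5 a ^ (2 j) (1 + π / a)`, which is `O((π r) ^ (2 j - 1))` for `r ≤ 1`.
-/

open Real intervalIntegral

theorem abs_integral_pow_mul_cos_le_one (j : ℕ) (c θ : ℝ) :
    |∫ t in (0:ℝ)..1, t ^ j * cos (c * t + θ)| ≤ 1 := by
  have h := norm_integral_le_of_norm_le_const (a := 0) (b := 1) (C := 1)
    (f := fun t => t ^ j * cos (c * t + θ)) fun t ht => by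
      rw [Set.uIoc_of_le zero_le_one] at ht
      rw [norm_mul, norm_pow, Real.norm_eq_abs, abs_of_pos ht.1]
      exact mul_le_one₀ (pow_le_one₀ ht.1.le ht.2) (norm_nonneg _) (abs_cos_le_one _)
  simpa using h

/-- Integrating by parts against `sin (c * t + θ)` trades the factor `c` for the derivative of
`t ^ j`, whose integral over `[0, 1]` is at most one. -/
theorem abs_mul_integral_pow_mul_cos_le_two (j : ℕ) (c θ : ℝ) :
    |c * ∫ t in (0:ℝ)..1, t ^ j * cos (c * t + θ)| ≤ 2 := by
  have hsin : ∀ t, HasDerivAt (fun t => sin (c * t + θ)) (c * cos (c * t + θ)) t := fun t => by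
    simpa [mul_comm] using (((hasDerivAt_id t).const_mul c).add_const θ).sin
  have hparts := integral_mul_deriv_eq_deriv_mul (a := 0) (b := 1)
    (fun t _ => hasDerivAt_pow j t) (fun t _ => hsin t)
    (Continuous.intervalIntegrable (by fun_prop) _ _)
    (Continuous.intervalIntegrable (by fun_prop) _ _)
  have hu' : ∫ t in (0:ℝ)..1, (j : ℝ) * t ^ (j - 1) = 1 - 0 ^ j := by
    rw [integral_eq_sub_of_hasDerivAt (fun t _ => hasDerivAt_pow j t)
      (Continuous.intervalIntegrable (by fun_prop) _ _), one_pow]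
  have hrest : |∫ t in (0:ℝ)..1, (j : ℝ) * t ^ (j - 1) * sin (c * t + θ)| ≤ 1 - 0 ^ j := by
    rw [← hu', ← Real.norm_eq_abs]
    refine norm_integral_le_of_norm_le zero_le_one
      (Filter.Eventually.of_forall fun t ht => ?_)
      ((by fun_prop : Continuous fun t : ℝ => (j : ℝ) * t ^ (j - 1)).intervalIntegrable _ _)
    have ht0 : 0 ≤ t := ht.1.le
    rw [norm_mul, Real.norm_eq_abs, abs_of_nonneg (by positivity)]
    exact mul_le_of_le_one_right (by positivity) (abs_sin_le_one _)
  have h0 : (0:ℝ) ≤ 0 ^ j := pow_nonneg le_rfl j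
  rw [← integral_const_mul]
  simp only [mul_left_comm c]
  rw [hparts, one_pow, one_mul]
  have h1 := abs_sin_le_one (c * 1 + θ)
  have h2 : |0 ^ j * sin (c * 0 + θ)| ≤ 0 ^ j := by
    rw [abs_mul, abs_of_nonneg h0]
    exact mul_le_of_le_one_right h0 (abs_sin_le_one _)
  have := abs_sub (sin (c * 1 + θ)) (0 ^ j * sin (c * 0 + θ))
  have := abs_sub (sin (c * 1 + θ) - 0 ^ j * sin (c * 0 + θ))
    (∫ t in (0:ℝ)..1, (j : ℝ) * t ^ (j - 1) * sin (c * t + θ))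
  linarith

theorem sq_integral_pow_mul_cos_le (j : ℕ) (c θ : ℝ) :
    (∫ t in (0:ℝ)..1, t ^ j * cos (c * t + θ)) ^ 2 ≤ 5 / (1 + c ^ 2) := by
  set I := ∫ t in (0:ℝ)..1, t ^ j * cos (c * t + θ)
  have h1 : I ^ 2 ≤ 1 := by
    simpa using pow_le_pow_left₀ (abs_nonneg I) (abs_integral_pow_mul_cos_le_one j c θ) 2
  have h2 : (c * I) ^ 2 ≤ 4 := by
    have h := pow_le_pow_left₀ (abs_nonneg _) (abs_mul_integral_pow_mul_cos_le_two j c θ) 2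
    rwa [sq_abs, show (2:ℝ) ^ 2 = 4 by norm_num] at h
  rw [le_div_iff₀ (by positivity)]
  nlinarith

/-- Differentiating `cos` shifts its phase by `π / 2`, hence the phase `j * (π / 2)`. -/
noncomputable def cosMoment (a : ℝ) (j : ℕ) (x : ℝ) : ℝ :=
  ∫ t in (0:ℝ)..1, t ^ j * cos (a * x * t + j * (π / 2))

theorem cosMoment_zero (a x : ℝ) : cosMoment a 0 x = sinc (a * x) := by
  rcases eq_or_ne (a * x) 0 with h | h
  · simp [cosMoment, h]
  · simp only [cosMoment, pow_zero, one_mul, CharP.cast_eq_zero, zero_mul, add_zero]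
    rw [integral_comp_mul_left (fun s => cos s) h, integral_cos, sinc_of_ne_zero h]
    simp [div_eq_inv_mul]

theorem hasDerivAt_cosMoment (a : ℝ) (j : ℕ) (x : ℝ) :
    HasDerivAt (cosMoment a j) (a * cosMoment a (j + 1) x) x := by
  have key := hasDerivAt_integral_of_dominated_loc_of_deriv_le (μ := MeasureTheory.volume)
    (a := 0) (b := 1) (x₀ := x) (bound := fun _ => |a|)
    (F := fun y t => t ^ j * cos (a * y * t + j * (π / 2)))
    (F' := fun y t => a * (t ^ (j + 1) * cos (a * y * t + (j + 1 : ℕ) * (π / 2))))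
    Filter.univ_mem
    (Filter.Eventually.of_forall fun y => (by fun_prop : Continuous fun t : ℝ =>
      t ^ j * cos (a * y * t + j * (π / 2))).aestronglyMeasurable)
    ((by fun_prop : Continuous fun t : ℝ =>
      t ^ j * cos (a * x * t + j * (π / 2))).intervalIntegrable _ _)
    ((by fun_prop : Continuous fun t : ℝ =>
      a * (t ^ (j + 1) * cos (a * x * t + (j + 1 : ℕ) * (π / 2)))).aestronglyMeasurable)
    (Filter.Eventually.of_forall fun t ht y _ => ?_)
    intervalIntegrable_const
    (Filter.Eventually.of_forall fun t _ y _ => ?_)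
  · rw [integral_const_mul] at key
    exact key.2
  · rw [Set.uIoc_of_le zero_le_one] at ht
    rw [norm_mul, norm_mul, norm_pow, Real.norm_eq_abs, Real.norm_eq_abs, abs_of_pos ht.1]
    exact mul_le_of_le_one_right (abs_nonneg a)
      (mul_le_one₀ (pow_le_one₀ ht.1.le ht.2) (norm_nonneg _) (abs_cos_le_one _))
  · have h := ((((hasDerivAt_id y).const_mul a).mul_const t).add_const
      ((j : ℝ) * (π / 2))).cos.const_mul (t ^ j)
    refine h.congr_deriv ?_
    rw [show ((j + 1 : ℕ) : ℝ) * (π / 2) = j * (π / 2) + π / 2 by push_cast; ring,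
      ← add_assoc, cos_add_pi_div_two]
    simp only [id, mul_one]
    ring

theorem iteratedDeriv_cosMoment_zero (a : ℝ) (j : ℕ) :
    iteratedDeriv j (cosMoment a 0) = fun x => a ^ j * cosMoment a j x := by
  induction j with
  | zero => simp
  | succ j ih =>
    ext x
    rw [iteratedDeriv_succ, ih, ((hasDerivAt_cosMoment a j x).const_mul (a ^ j)).deriv, pow_succ,
      mul_assoc]

theorem sum_range_inv_one_add_sq_le {a : ℝ} (ha : 0 < a) (m : ℕ) :
    ∑ i ∈ Finset.range m, (1 + (a * (i + 1 : ℕ)) ^ 2)⁻¹ ≤ π / (2 * a) := by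
  have hanti : AntitoneOn (fun x : ℝ => (1 + (a * x) ^ 2)⁻¹) (Set.Icc 0 (0 + m)) :=
    fun x hx y hy hxy => by
      have : (a * x) ^ 2 ≤ (a * y) ^ 2 := by
        have := hx.1; gcongr
      exact inv_anti₀ (by positivity) (by linarith)
  have h := hanti.sum_le_integral
  simp only [zero_add] at h
  refine h.trans ?_
  rw [integral_comp_mul_left (fun x => (1 + x ^ 2)⁻¹) ha.ne', mul_zero, smul_eq_mul,
    integral_inv_one_add_sq, arctan_zero, sub_zero, inv_mul_eq_div, div_le_div_iff₀ ha (by positivity)]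
  nlinarith [arctan_lt_pi_div_two (a * m)]

theorem hasSum_int_inv_one_add_sq_le {a : ℝ} (ha : 0 < a) :
    ∃ s ≤ 1 + π / a, HasSum (fun n : ℤ => (1 + (a * n) ^ 2)⁻¹) s := by
  set f : ℕ → ℝ := fun i => (1 + (a * (i + 1 : ℕ)) ^ 2)⁻¹
  have hf : Summable f := summable_of_sum_range_le (fun _ => by positivity)
    (sum_range_inv_one_add_sq_le ha)
  have hle : ∑' i, f i ≤ π / (2 * a) :=
    Real.tsum_le_of_sum_range_le (fun _ => by positivity) (sum_range_inv_one_add_sq_le ha)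
  refine ⟨_, ?_, HasSum.of_add_one_of_neg_add_one (f := fun n : ℤ => (1 + (a * n) ^ 2)⁻¹)
    (m := ∑' i, f i) (m' := ∑' i, f i) ?_ ?_⟩
  · have hhalf : π / (2 * a) = π / a / 2 := by ring
    norm_num
    linarith
  · convert hf.hasSum using 3 with i; push_cast; ring
  · convert hf.hasSum using 3 with i; push_cast; ring

theorem five_mul_pow_mul_one_add_inv_le {b r : ℝ} (hb : 0 < b) (hr : 0 < r) (hr1 : r ≤ 1) {j : ℕ}
    (hj : 1 ≤ j) : 5 * (b * r) ^ (2 * j) * (1 + b / (b * r)) ≤ (10 * b ^ 2) ^ j * r ^ j := by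
  have hrj : r ^ j * (1 + b / (b * r)) ≤ 2 := by
    have hle : r ^ j ≤ r := pow_le_of_le_one hr.le hr1 (by omega)
    rw [div_mul_cancel_left₀ hb.ne', mul_add, mul_one, ← div_eq_mul_inv]
    linarith [(div_le_one hr).2 hle]
  have h10 : (10:ℝ) ≤ 10 ^ j := le_self_pow₀ (by norm_num) (by omega)
  calc 5 * (b * r) ^ (2 * j) * (1 + b / (b * r))
      = 5 * (b ^ 2) ^ j * r ^ j * (r ^ j * (1 + b / (b * r))) := by ring
    _ ≤ 5 * (b ^ 2) ^ j * r ^ j * 2 := by gcongr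
    _ ≤ 10 ^ j * (b ^ 2) ^ j * r ^ j := by nlinarith [show 0 ≤ (b ^ 2) ^ j * r ^ j by positivity]
    _ = (10 * b ^ 2) ^ j * r ^ j := by rw [mul_pow]

theorem stmt_17 :
    ∃ C : ℝ, ∀ r : ℝ, 0 < r → r ≤ 1 → ∀ j : ℕ, 1 ≤ j →
      ∑' n : ℤ,
        (iteratedDeriv j
          (fun x : ℝ => if x = 0 then 1 else Real.sin (Real.pi * r * x) / (Real.pi * r * x))
          (n : ℝ)) ^ 2 ≤ C ^ j * r ^ j := by
  refine ⟨10 * π ^ 2, fun r hr hr1 j hj => ?_⟩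
  set a := π * r
  have ha : 0 < a := by positivity
  have hsinc : (fun x : ℝ => if x = 0 then 1 else sin (a * x) / (a * x)) = cosMoment a 0 := by
    ext x
    simp [cosMoment_zero, sinc_apply, ha.ne']
  rw [hsinc, iteratedDeriv_cosMoment_zero]
  obtain ⟨s, hs, hsum⟩ := hasSum_int_inv_one_add_sq_le ha
  have hterm (n : ℤ) : (a ^ j * cosMoment a j n) ^ 2 ≤ 5 * a ^ (2 * j) * (1 + (a * n) ^ 2)⁻¹ := by
    rw [mul_pow, ← pow_mul, mul_comm j 2, mul_comm 5, mul_assoc, ← div_eq_mul_inv]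
    exact mul_le_mul_of_nonneg_left (sq_integral_pow_mul_cos_le _ _ _) (by positivity)
  have hbound := hsum.mul_left (5 * a ^ (2 * j))
  calc ∑' n : ℤ, (a ^ j * cosMoment a j n) ^ 2
      ≤ ∑' n : ℤ, 5 * a ^ (2 * j) * (1 + (a * n) ^ 2)⁻¹ :=
        (hbound.summable.of_nonneg_of_le (fun _ => sq_nonneg _) hterm).tsum_le_tsum
          hterm hbound.summable
    _ = 5 * a ^ (2 * j) * s := hbound.tsum_eq
    _ ≤ 5 * a ^ (2 * j) * (1 + π / a) := by gcongr
    _ ≤ (10 * π ^ 2) ^ j * r ^ j := five_mul_pow_mul_one_add_inv_le pi_pos hr hr1 hj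
end

section
/- Let b_{-m}, ..., b_m be real numbers (m = N/2 − 1) and let Γ ⊂ ℕ₀ with 0 ∈ Γ contain E even elements and O odd elements, where E = O = N/2 and m + 1 ≤ min(E, O). If Σ_{k=−m}^{m} k^γ b_k = 0 for every γ ∈ Γ, then b_k = 0 for all k. -/
open Polynomial in
theorem posroots_lt_card_support' : ∀ (n : ℕ) (p : ℝ[X]), p ≠ 0 → p.natDegree ≤ n →
    (p.roots.toFinset.filter (fun x => 0 < x)).card < p.support.card := by
  intro n
  induction n with
  | zero =>
    intro p hp hdeg
    have hpc : p = C (p.coeff 0) := (Polynomial.eq_C_of_natDegree_eq_zero (Nat.le_zero.mp hdeg))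
    rw [hpc, roots_C]
    simpa using fun h => hp (by rw [hpc, h, map_zero])
  | succ n ih =>
    intro p hp hdeg
    by_cases hc0 : p.coeff 0 = 0
    · -- p = X * divX p
      set q := p.divX with hq
      have hpq : p = X * q := by
        conv_lhs => rw [← X_mul_divX_add p, hc0, map_zero, add_zero]
      have hq0 : q ≠ 0 := by
        intro h; apply hp; rw [hpq, h, mul_zero]
      have hdq : q.natDegree < p.natDegree := by
        have h1 : p.natDegree ≠ 0 := by
          intro h
          exact hp ((Polynomial.eq_C_of_natDegree_eq_zero h).trans (by rw [hc0, map_zero]))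
        have h2 := Polynomial.natDegree_divX_eq_natDegree_tsub_one (p := p)
        rw [← hq] at h2
        omega
      have hroots : p.roots = 0 ::ₘ q.roots := by
        rw [hpq, roots_mul (hpq ▸ hp), roots_X]; rfl
      have hfilter : p.roots.toFinset.filter (fun x => 0 < x)
          = q.roots.toFinset.filter (fun x => 0 < x) := by
        rw [hroots]
        ext x
        simp only [Finset.mem_filter, Multiset.mem_toFinset, Multiset.mem_cons]
        constructor
        · rintro ⟨h1 | h1, h2⟩
          · exact absurd h1 h2.ne'
          · exact ⟨h1, h2⟩
        · rintro ⟨h1, h2⟩; exact ⟨Or.inr h1, h2⟩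
      have hsupp : p.support = q.support.image (· + 1) := by
        ext k
        simp only [Polynomial.mem_support_iff, Finset.mem_image]
        constructor
        · intro hk
          cases k with
          | zero => exact absurd hc0 hk
          | succ k =>
            refine ⟨k, ?_, rfl⟩
            rw [hpq, Polynomial.coeff_X_mul] at hk
            exact hk
        · rintro ⟨j, hj, rfl⟩
          rw [hpq, Polynomial.coeff_X_mul]
          exact hj
      have hcard : p.support.card = q.support.card := by
        rw [hsupp, Finset.card_image_of_injective _ (add_left_injective 1)]
      rw [hfilter, hcard]
      exact ih q hq0 (by omega)
    · by_cases hd : Polynomial.derivative p = 0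
      · rw [Polynomial.eq_C_of_derivative_eq_zero hd, roots_C]
        simpa using hc0
      · set s := p.roots.toFinset.filter (fun x => 0 < x) with hs
        set t := (Polynomial.derivative p).roots.toFinset.filter (fun x => 0 < x) with ht
        have hrolle : s.card ≤ (t \ s).card + 1 := by
          refine Finset.card_le_diff_of_interleaved fun x hx y hy hxy _ => ?_
          simp only [hs, Finset.mem_filter, Multiset.mem_toFinset, mem_roots hp] at hx hy
          obtain ⟨z, hz1, hz2⟩ := exists_deriv_eq_zero hxy p.continuousOn
            (hx.1.trans hy.1.symm)
          refine ⟨z, ?_, hz1⟩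
          simp only [ht, Finset.mem_filter, Multiset.mem_toFinset, mem_roots hd]
          exact ⟨by rwa [Polynomial.IsRoot, ← p.deriv], lt_trans hx.2 hz1.1⟩
        have hst : s.card ≤ t.card + 1 :=
          hrolle.trans (by gcongr; exact Finset.sdiff_subset)
        have hd0 : p.natDegree ≠ 0 := by
          intro h
          exact hd (by rw [Polynomial.eq_C_of_natDegree_eq_zero h]; simp)
        have hdegd : (Polynomial.derivative p).natDegree ≤ n := by
          have := Polynomial.natDegree_derivative_lt hd0
          omega
        have hsuppsub : (Polynomial.derivative p).support.image (· + 1)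
            ⊆ p.support.erase 0 := by
          intro k hk
          simp only [Finset.mem_image, Polynomial.mem_support_iff] at hk
          obtain ⟨j, hj, rfl⟩ := hk
          rw [Polynomial.coeff_derivative] at hj
          simp only [Finset.mem_erase, Polynomial.mem_support_iff]
          exact ⟨by omega, fun h => hj (by rw [h, zero_mul])⟩
        have hcardd : (Polynomial.derivative p).support.card + 1 ≤ p.support.card := by
          have h1 : (Polynomial.derivative p).support.card ≤ (p.support.erase 0).card := by
            rw [← Finset.card_image_of_injective _ (add_left_injective 1)]
            exact Finset.card_le_card hsuppsub
          have h2 : (0:ℕ) ∈ p.support := Polynomial.mem_support_iff.mpr hc0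
          have := Finset.card_erase_of_mem h2
          have := Finset.card_pos.mpr ⟨0, h2⟩
          omega
        have hih := ih (Polynomial.derivative p) hd hdegd
        rw [← ht] at hih
        omega

open Polynomial in
theorem vdm_inj' (n : ℕ) (e : Fin n → ℕ) (he : Function.Injective e)
    (v : Fin n → ℕ) (hv : Function.Injective v)
    (h0 : ∀ j, v j = 0 → ∃ i, e i = 0)
    (c : Fin n → ℝ) (hc : ∀ i, ∑ j, ((v j : ℕ) : ℝ) ^ (e i) * c j = 0) :
    ∀ j, c j = 0 := by
  set M : Matrix (Fin n) (Fin n) ℝ := fun i j => ((v j : ℕ) : ℝ) ^ (e i) with hM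
  have hdet : M.det ≠ 0 := by
    intro hdet
    have hdetT : M.transpose.det = 0 := by rwa [Matrix.det_transpose]
    obtain ⟨a, ha0, hMa⟩ := (Matrix.exists_mulVec_eq_zero_iff).mpr hdetT
    -- polynomial
    set p : ℝ[X] := ∑ i, C (a i) * X ^ (e i) with hp
    have hcoeff : ∀ i, p.coeff (e i) = a i := by
      intro i
      rw [hp, Polynomial.finset_sum_coeff]
      rw [Finset.sum_eq_single i]
      · simp
      · intro i' _ hne
        simp only [Polynomial.coeff_C_mul, Polynomial.coeff_X_pow]
        rw [if_neg (fun h => hne (he h).symm), mul_zero]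
      · simp
    have hpne : p ≠ 0 := by
      intro h
      apply ha0
      funext i
      rw [← hcoeff i, h]
      simp
    have heval : ∀ j : Fin n, p.eval ((v j : ℕ) : ℝ) = 0 := by
      intro j
      have := congrFun hMa j
      simp only [Matrix.mulVec, Matrix.transpose_apply, dotProduct, hM,
        Pi.zero_apply] at this
      rw [hp]
      simp only [Polynomial.eval_finset_sum, Polynomial.eval_mul, Polynomial.eval_C,
        Polynomial.eval_pow, Polynomial.eval_X]
      rw [← this]
      exact Finset.sum_congr rfl fun i _ => mul_comm _ _
    -- support bound and positive roots
    have hsupp : p.support ⊆ Finset.univ.image e := by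
      intro k hk
      rw [Polynomial.mem_support_iff] at hk
      by_contra hkim
      apply hk
      rw [hp, Polynomial.finset_sum_coeff]
      apply Finset.sum_eq_zero
      intro i _
      simp only [Polynomial.coeff_C_mul, Polynomial.coeff_X_pow]
      rw [if_neg, mul_zero]
      intro h
      exact hkim (Finset.mem_image.mpr ⟨i, Finset.mem_univ i, h.symm⟩)
    have hkey := posroots_lt_card_support' p.natDegree p hpne le_rfl
    by_cases hz : ∃ j₀, v j₀ = 0
    · obtain ⟨j₀, hj₀⟩ := hz
      obtain ⟨i₀, hi₀⟩ := h0 j₀ hj₀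
      have hai₀ : a i₀ = 0 := by
        rw [← hcoeff i₀, hi₀]
        rw [Polynomial.coeff_zero_eq_eval_zero]
        have := heval j₀
        rwa [hj₀, Nat.cast_zero] at this
        
      have hsupp' : p.support ⊆ (Finset.univ.erase i₀).image e := by
        intro k hk
        obtain ⟨i, _, rfl⟩ := Finset.mem_image.mp (hsupp hk)
        refine Finset.mem_image.mpr ⟨i, Finset.mem_erase.mpr ⟨?_, Finset.mem_univ i⟩, rfl⟩
        rintro rfl
        rw [Polynomial.mem_support_iff, hcoeff i] at hk
        exact hk hai₀
      have hcard1 : p.support.card ≤ n - 1 := by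
        calc p.support.card ≤ ((Finset.univ.erase i₀).image e).card :=
              Finset.card_le_card hsupp'
          _ ≤ (Finset.univ.erase i₀).card := Finset.card_image_le
          _ = n - 1 := by rw [Finset.card_erase_of_mem (Finset.mem_univ i₀)]; simp
      have hroots : (Finset.univ.erase j₀).image (fun j => ((v j : ℕ) : ℝ))
          ⊆ p.roots.toFinset.filter (fun x => 0 < x) := by
        intro x hx
        obtain ⟨j, hj, rfl⟩ := Finset.mem_image.mp hx
        rw [Finset.mem_erase] at hj
        have hvj : 0 < v j := by
          rcases Nat.eq_zero_or_pos (v j) with h | h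
          · exact absurd (hv (h.trans hj₀.symm)) hj.1
          · exact h
        refine Finset.mem_filter.mpr ⟨Multiset.mem_toFinset.mpr ?_, by exact_mod_cast hvj⟩
        rw [mem_roots hpne]
        exact heval j
      have hcard2 : n - 1 ≤ (p.roots.toFinset.filter (fun x => 0 < x)).card := by
        calc n - 1 = (Finset.univ.erase j₀).card := by
              rw [Finset.card_erase_of_mem (Finset.mem_univ j₀)]; simp
          _ = ((Finset.univ.erase j₀).image (fun j => ((v j : ℕ) : ℝ))).card := by
              rw [Finset.card_image_of_injective _
                (fun x y h => hv (by exact_mod_cast h))]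
          _ ≤ _ := Finset.card_le_card hroots
      omega
    · push_neg at hz
      have hcard1 : p.support.card ≤ n := by
        calc p.support.card ≤ (Finset.univ.image e).card := Finset.card_le_card hsupp
          _ ≤ (Finset.univ : Finset (Fin n)).card := Finset.card_image_le
          _ = n := by simp
      have hroots : Finset.univ.image (fun j => ((v j : ℕ) : ℝ))
          ⊆ p.roots.toFinset.filter (fun x => 0 < x) := by
        intro x hx
        obtain ⟨j, _, rfl⟩ := Finset.mem_image.mp hx
        have hvj : 0 < v j := Nat.pos_of_ne_zero (hz j)
        refine Finset.mem_filter.mpr ⟨Multiset.mem_toFinset.mpr ?_, by exact_mod_cast hvj⟩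
        rw [mem_roots hpne]
        exact heval j
      have hcard2 : n ≤ (p.roots.toFinset.filter (fun x => 0 < x)).card := by
        calc n = (Finset.univ.image (fun j => ((v j : ℕ) : ℝ))).card := by
              rw [Finset.card_image_of_injective _
                (fun x y h => hv (by exact_mod_cast h))]; simp
          _ ≤ _ := Finset.card_le_card hroots
      omega
  -- conclude c = 0
  by_contra hcne
  push_neg at hcne
  obtain ⟨j, hj⟩ := hcne
  apply hdet
  rw [← Matrix.exists_mulVec_eq_zero_iff]
  refine ⟨c, fun h => hj (by rw [h]; rfl), ?_⟩
  funext i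
  simp only [Matrix.mulVec, dotProduct, hM, Pi.zero_apply]
  exact hc i



theorem sum_Icc_int' (m : ℕ) (f : ℤ → ℝ) :
    ∑ k ∈ Finset.Icc (-(m:ℤ)) (m:ℤ), f k
      = f 0 + ∑ j ∈ Finset.range m, (f ((j:ℤ)+1) + f (-((j:ℤ)+1))) := by
  induction m with
  | zero => simp
  | succ m ih =>
    have hins : Finset.Icc (-((m+1:ℕ):ℤ)) ((m+1:ℕ):ℤ)
        = insert (-((m:ℤ)+1)) (insert ((m:ℤ)+1) (Finset.Icc (-(m:ℤ)) (m:ℤ))) := by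
      ext k
      simp only [Finset.mem_Icc, Finset.mem_insert]
      push_cast
      omega
    rw [hins, Finset.sum_insert, Finset.sum_insert, ih, Finset.sum_range_succ]
    · push_cast
      ring
    · simp only [Finset.mem_Icc]
      omega
    · simp only [Finset.mem_insert, Finset.mem_Icc]
      push_cast
      omega


theorem stmt_19 (m : ℕ) (Γ : Finset ℕ) (h0 : 0 ∈ Γ)
    (E O : ℕ) (hE : (Γ.filter (fun γ => Even γ)).card = E)
    (hO : (Γ.filter (fun γ => Odd γ)).card = O)
    (hEO : E = O) (hm : m + 1 ≤ E)
    (b : ℤ → ℝ) (hbsupp : ∀ k : ℤ, (m : ℤ) < |k| → b k = 0)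
    (hsys : ∀ γ ∈ Γ, ∑ k ∈ Finset.Icc (-(m : ℤ)) (m : ℤ), (k : ℝ) ^ γ * b k = 0) :
    ∀ k : ℤ, b k = 0 := by
  set Γe := Γ.filter (fun γ => Even γ) with hΓe
  set Γo := Γ.filter (fun γ => Odd γ) with hΓo
  have h0e : (0:ℕ) ∈ Γe := Finset.mem_filter.mpr ⟨h0, Even.zero⟩
  -- rearranged system
  have hsys' : ∀ γ ∈ Γ, ((0:ℝ))^γ * b 0
      + ∑ j ∈ Finset.range m, ((((j:ℤ)+1 : ℤ):ℝ)^γ * b ((j:ℤ)+1)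
          + (((-((j:ℤ)+1)) : ℤ):ℝ)^γ * b (-((j:ℤ)+1))) = 0 := by
    intro γ hγ
    have := hsys γ hγ
    rw [sum_Icc_int' m (fun k => (k:ℝ)^γ * b k)] at this
    simpa using this
  -- Even part
  have hEvenZero : ∀ t : ℕ, t ≤ m →
      (if t = 0 then b 0 else b (t:ℤ) + b (-(t:ℤ))) = 0 := by
    have hTsub : m ≤ (Γe.erase 0).card := by
      rw [Finset.card_erase_of_mem h0e, hE]; omega
    obtain ⟨T, hTsub', hTcard⟩ := Finset.exists_subset_card_eq hTsub
    set S := insert 0 T with hS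
    have h0T : (0:ℕ) ∉ T := fun h => (Finset.mem_erase.mp (hTsub' h)).1 rfl
    have hScard : S.card = m + 1 := by rw [hS, Finset.card_insert_of_notMem h0T, hTcard]
    have hSsub : S ⊆ Γe := by
      intro x hx
      rcases Finset.mem_insert.mp hx with rfl | hx
      · exact h0e
      · exact Finset.erase_subset _ _ (hTsub' hx)
    set σ : Fin (m+1) → ℕ := fun i => ((S.orderIsoOfFin hScard i : ℕ)) with hσ
    have hσinj : Function.Injective σ := fun i j h => by
      have := (S.orderIsoOfFin hScard).injective (Subtype.ext h)
      exact this
    have hσmem : ∀ i, σ i ∈ S := fun i => (S.orderIsoOfFin hScard i).2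
    have hσ0 : ∃ i, σ i = 0 := by
      refine ⟨(S.orderIsoOfFin hScard).symm ⟨0, Finset.mem_insert_self 0 T⟩, ?_⟩
      rw [hσ]
      simp
    set cc : ℕ → ℝ := fun t => if t = 0 then b 0 else b (t:ℤ) + b (-(t:ℤ)) with hcc
    have hc : ∀ i : Fin (m+1), ∑ j : Fin (m+1), (((j:ℕ) : ℝ)) ^ (σ i) * cc (j:ℕ) = 0 := by
      intro i
      have hγS := hσmem i
      have hγe := hSsub hγS
      have hγΓ : σ i ∈ Γ := (Finset.mem_filter.mp hγe).1
      have hγeven : Even (σ i) := (Finset.mem_filter.mp hγe).2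
      have h1 := hsys' (σ i) hγΓ
      rw [Fin.sum_univ_eq_sum_range (fun t => ((t : ℝ)) ^ (σ i) * cc t) (m+1),
        Finset.sum_range_succ']
      have h2 : ∀ j ∈ Finset.range m, (((j+1 : ℕ)) : ℝ) ^ (σ i) * cc (j+1)
          = (((j:ℤ)+1 : ℤ):ℝ)^(σ i) * b ((j:ℤ)+1)
            + (((-((j:ℤ)+1)) : ℤ):ℝ)^(σ i) * b (-((j:ℤ)+1)) := by
        intro j _
        rw [hcc]
        simp only [Nat.succ_ne_zero, if_false]
        push_cast
        rw [hγeven.neg_pow]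
        ring
      rw [Finset.sum_congr rfl h2]
      have h3 : (((0:ℕ)):ℝ) ^ (σ i) * cc 0 = ((0:ℝ))^(σ i) * b 0 := by
        rw [hcc]; norm_num
      rw [h3]
      linarith [h1]
    have := vdm_inj' (m+1) σ hσinj (fun j => (j:ℕ)) Fin.val_injective
      (fun j _ => hσ0) (fun j => cc (j:ℕ)) hc
    intro t ht
    exact this ⟨t, by omega⟩
  -- Odd part
  have hOddZero : ∀ t : ℕ, 1 ≤ t → t ≤ m → b (t:ℤ) - b (-(t:ℤ)) = 0 := by
    have hTsub : m ≤ Γo.card := by rw [hO]; omega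
    obtain ⟨S, hSsub, hScard⟩ := Finset.exists_subset_card_eq hTsub
    set σ : Fin m → ℕ := fun i => ((S.orderIsoOfFin hScard i : ℕ)) with hσ
    have hσinj : Function.Injective σ := fun i j h => by
      exact (S.orderIsoOfFin hScard).injective (Subtype.ext h)
    have hσmem : ∀ i, σ i ∈ S := fun i => (S.orderIsoOfFin hScard i).2
    set dd : ℕ → ℝ := fun t => b (t:ℤ) - b (-(t:ℤ)) with hdd
    have hc : ∀ i : Fin m, ∑ j : Fin m, ((((j:ℕ)+1 : ℕ)) : ℝ) ^ (σ i) * dd ((j:ℕ)+1) = 0 := by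
      intro i
      have hγo := hSsub (hσmem i)
      have hγΓ : σ i ∈ Γ := (Finset.mem_filter.mp hγo).1
      have hγodd : Odd (σ i) := (Finset.mem_filter.mp hγo).2
      have h1 := hsys' (σ i) hγΓ
      have hσne : σ i ≠ 0 := by rcases hγodd with ⟨r, hr⟩; omega
      have h0γ : ((0:ℝ))^(σ i) = 0 := zero_pow hσne
      rw [h0γ, zero_mul, zero_add] at h1
      rw [Fin.sum_univ_eq_sum_range (fun t => (((t+1 : ℕ)) : ℝ) ^ (σ i) * dd (t+1)) m]
      have h2 : ∀ j ∈ Finset.range m, (((j+1 : ℕ)) : ℝ) ^ (σ i) * dd (j+1)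
          = (((j:ℤ)+1 : ℤ):ℝ)^(σ i) * b ((j:ℤ)+1)
            + (((-((j:ℤ)+1)) : ℤ):ℝ)^(σ i) * b (-((j:ℤ)+1)) := by
        intro j _
        rw [hdd]
        push_cast
        rw [hγodd.neg_pow]
        ring
      rw [Finset.sum_congr rfl h2]
      exact h1
    have := vdm_inj' m σ hσinj (fun j => (j:ℕ)+1) (fun i j h => by
        simp only [add_left_inj] at h
        exact Fin.val_injective h)
      (fun j h => by simp at h) (fun j => dd ((j:ℕ)+1)) hc
    intro t ht1 ht2
    have := this ⟨t-1, by omega⟩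
    simpa [hdd, Nat.sub_add_cancel ht1] using this
  -- conclude
  intro k
  rcases lt_or_ge (m:ℤ) |k| with h | h
  · exact hbsupp k h
  · rw [Int.abs_eq_natAbs] at h
    rcases lt_trichotomy k 0 with hk | hk | hk
    · set t : ℕ := k.natAbs with htdef
      have hkt : k = -(t:ℤ) := by omega
      have ht1 : 1 ≤ t := by omega
      have ht2 : t ≤ m := by omega
      have he := hEvenZero t ht2
      rw [if_neg (by omega)] at he
      have ho := hOddZero t ht1 ht2
      rw [hkt]
      linarith
    · subst hk
      have := hEvenZero 0 (Nat.zero_le m)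
      simpa using this
    · set t : ℕ := k.natAbs with htdef
      have hkt : k = (t:ℤ) := by omega
      have ht1 : 1 ≤ t := by omega
      have ht2 : t ≤ m := by omega
      have he := hEvenZero t ht2
      rw [if_neg (by omega)] at he
      have ho := hOddZero t ht1 ht2
      rw [hkt]
      linarith
end
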